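/- arXiv:2505.10458 — 4 statements merged into one kernel-verified Lean document; each statement's English description precedes it below -/
import Mathlib

section
/- Let (X,T) be a topological dynamical system, E ⊂ X analytic, μ a Borel probability measure on X, and s ≥ 0. (a) If the local upper entropy satisfies h̄_μ(T,x) ≤ s for all x ∈ E, then the packing topological entropy h^P_top(T,E) ≤ s. (b) If μ(E) > 0 and h̄_μ(T,x) ≥ s for all x ∈ E, then h^P_top(T,E) ≥ s. -/
open Filter Set MeasureTheory Topology
open scoped ENNReal NNReal

section DynDefs
variable {X : Type*} [MetricSpace X]

/-- The open Bowen ball of order `n` and radius `ε` centered at `x`. -/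
def bowenBall (T : X → X) (n : ℕ) (x : X) (ε : ℝ) : Set X :=
  {y | ∀ k < n, dist (T^[k] x) (T^[k] y) < ε}

/-- The closed Bowen ball of order `n` and radius `ε` centered at `x`. -/
def closedBowenBall (T : X → X) (n : ℕ) (x : X) (ε : ℝ) : Set X :=
  {y | ∀ k < n, dist (T^[k] x) (T^[k] y) ≤ ε}

/-- A gauge (dimension) function on `ℕ`: positive, antitone, tending to `0`. -/
def GaugeSeq (b : ℕ → ℝ) : Prop :=
  (∀ n, 0 < b n) ∧ Antitone b ∧ Tendsto b atTop (nhds 0)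

/-- `M^b_{N,ε}(Z)`: infimum of `∑ b(n_i)` over countable covers of `Z` by Bowen
balls of radius `ε` and orders `≥ N`. -/
noncomputable def bowenM (T : X → X) (b : ℕ → ℝ) (N : ℕ) (ε : ℝ) (Z : Set X) : ℝ≥0∞ :=
  sInf { r : ℝ≥0∞ | ∃ (x : ℕ → X) (n : ℕ → ℕ), (∀ i, N ≤ n i) ∧
      Z ⊆ ⋃ i, bowenBall T (n i) (x i) ε ∧ r = ∑' i, ENNReal.ofReal (b (n i)) }

/-- `M^b_ε(Z) = lim_{N → ∞} M^b_{N,ε}(Z) = sup_N M^b_{N,ε}(Z)`. -/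
noncomputable def bowenMe (T : X → X) (b : ℕ → ℝ) (ε : ℝ) (Z : Set X) : ℝ≥0∞ :=
  ⨆ N : ℕ, bowenM T b N ε Z

/-- `M^b(Z) = lim_{ε → 0} M^b_ε(Z) = sup_{ε > 0} M^b_ε(Z)`. -/
noncomputable def bowenMFull (T : X → X) (b : ℕ → ℝ) (Z : Set X) : ℝ≥0∞ :=
  ⨆ ε : {ε : ℝ // 0 < ε}, bowenMe T b ε.1 Z

/-- Bowen topological entropy of `Z` at scale `ε`: the critical exponent where
`M^s_ε(Z)` jumps from `∞` to `0`. -/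
noncomputable def bowenEntropyE (T : X → X) (ε : ℝ) (Z : Set X) : ℝ≥0∞ :=
  ⨆ s : {s : ℝ≥0 // bowenMe T (fun n => Real.exp (-(s : ℝ) * (n : ℝ))) ε Z = ⊤}, (s.1 : ℝ≥0∞)

/-- Bowen topological entropy of a subset `Z`. -/
noncomputable def bowenEntropy (T : X → X) (Z : Set X) : ℝ≥0∞ :=
  ⨆ ε : {ε : ℝ // 0 < ε}, bowenEntropyE T ε.1 Z

/-- `P^s_{N,ε}(Z)`: supremum of `∑ e^{-s n_i}` over countable pairwise disjoint
families of closed Bowen balls with centers in `Z` and orders `≥ N`. -/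
noncomputable def packP (T : X → X) (s : ℝ) (N : ℕ) (ε : ℝ) (Z : Set X) : ℝ≥0∞ :=
  sSup { r : ℝ≥0∞ | ∃ (J : Set ℕ) (x : ℕ → X) (n : ℕ → ℕ),
      (∀ i ∈ J, x i ∈ Z ∧ N ≤ n i) ∧
      (J.PairwiseDisjoint fun i => closedBowenBall T (n i) (x i) ε) ∧
      r = ∑' i : J, ENNReal.ofReal (Real.exp (-s * ((n i.1 : ℕ) : ℝ))) }

/-- `P^s_ε(Z) = lim_{N → ∞} P^s_{N,ε}(Z) = inf_N P^s_{N,ε}(Z)`. -/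
noncomputable def packPe (T : X → X) (s : ℝ) (ε : ℝ) (Z : Set X) : ℝ≥0∞ :=
  ⨅ N : ℕ, packP T s N ε Z

/-- `𝒫^s_ε(Z)`: the packing pre-measure, infimum of `∑_i P^s_ε(Z_i)` over
countable covers `{Z_i}` of `Z`. -/
noncomputable def packMeasE (T : X → X) (s : ℝ) (ε : ℝ) (Z : Set X) : ℝ≥0∞ :=
  ⨅ (Zi : ℕ → Set X) (_ : Z ⊆ ⋃ i, Zi i), ∑' i, packPe T s ε (Zi i)

/-- Packing topological entropy of `Z` at scale `ε`: the critical exponent where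
`𝒫^s_ε(Z)` jumps from `∞` to `0`. -/
noncomputable def packEntropyE (T : X → X) (ε : ℝ) (Z : Set X) : ℝ≥0∞ :=
  ⨆ s : {s : ℝ≥0 // packMeasE T (s : ℝ) ε Z = ⊤}, (s.1 : ℝ≥0∞)

/-- Packing topological entropy of a subset `Z`. -/
noncomputable def packEntropy (T : X → X) (Z : Set X) : ℝ≥0∞ :=
  ⨆ ε : {ε : ℝ // 0 < ε}, packEntropyE T ε.1 Z

/-- `-(1/n) log a`, valued in `ℝ≥0∞`, with the convention `log 0 = -∞`. -/
noncomputable def negLogDiv (a : ℝ≥0∞) (n : ℕ) : ℝ≥0∞ :=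
  if a = 0 then ⊤ else ENNReal.ofReal (-(Real.log a.toReal) / (n : ℝ))

/-- Minimal cardinality of a finite `(n,ε)`-spanning set of `Z`. -/
noncomputable def spanCard (T : X → X) (n : ℕ) (ε : ℝ) (Z : Set X) : ℝ≥0∞ :=
  ⨅ (E : Finset X) (_ : ∀ z ∈ Z, ∃ y ∈ E, ∀ k < n, dist (T^[k] z) (T^[k] y) ≤ ε),
    (E.card : ℝ≥0∞)

/-- Topological entropy of a subset `Z` defined via spanning sets. -/
noncomputable def htopSet (T : X → X) (Z : Set X) : ℝ≥0∞ :=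
  ⨆ ε : {ε : ℝ // 0 < ε},
    Filter.limsup (fun n => ENNReal.ofReal (Real.log (spanCard T n ε.1 Z).toReal / (n : ℝ))) atTop

/-- `W^b_{N,ε}(Z)`: the weighted Bowen-ball covering quantity, infimum of
`∑ c_i b(n_i)` over weighted families with `∑ c_i χ_{B_{n_i}(x_i,ε)} ≥ χ_Z`. -/
noncomputable def weightedW (T : X → X) (b : ℕ → ℝ) (N : ℕ) (ε : ℝ) (Z : Set X) : ℝ≥0∞ :=
  sInf { r : ℝ≥0∞ | ∃ (x : ℕ → X) (n : ℕ → ℕ) (c : ℕ → ℝ),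
      (∀ i, 0 < c i) ∧ (∀ i, N ≤ n i) ∧
      (∀ z ∈ Z, (1 : ℝ≥0∞) ≤
        ∑' i, Set.indicator (bowenBall T (n i) (x i) ε) (fun _ => ENNReal.ofReal (c i)) z) ∧
      r = ∑' i, ENNReal.ofReal (c i) * ENNReal.ofReal (b (n i)) }

/-- `W^b(Z)`: double limit of `W^b_{N,ε}(Z)` as `N → ∞` and `ε → 0`. -/
noncomputable def weightedWFull (T : X → X) (b : ℕ → ℝ) (Z : Set X) : ℝ≥0∞ :=
  ⨆ ε : {ε : ℝ // 0 < ε}, ⨆ N : ℕ, weightedW T b N ε Z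

end DynDefs

section MeasDefs
variable {X : Type*} [MetricSpace X] [MeasurableSpace X]

/-- Local upper entropy of `μ` at `x` for radius `ε`. -/
noncomputable def upperLocalEntropyE (T : X → X) (μ : Measure X) (x : X) (ε : ℝ) : ℝ≥0∞ :=
  Filter.limsup (fun n => negLogDiv (μ (bowenBall T n x ε)) n) atTop

/-- Local lower entropy of `μ` at `x` for radius `ε`. -/
noncomputable def lowerLocalEntropyE (T : X → X) (μ : Measure X) (x : X) (ε : ℝ) : ℝ≥0∞ :=
  Filter.liminf (fun n => negLogDiv (μ (bowenBall T n x ε)) n) atTop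

/-- Local upper entropy `h̄_μ(T,x) = lim_{ε → 0} limsup_n -(1/n) log μ(B_n(x,ε))`. -/
noncomputable def upperLocalEntropy (T : X → X) (μ : Measure X) (x : X) : ℝ≥0∞ :=
  ⨆ ε : {ε : ℝ // 0 < ε}, upperLocalEntropyE T μ x ε.1

/-- Local lower entropy `h̲_μ(T,x) = lim_{ε → 0} liminf_n -(1/n) log μ(B_n(x,ε))`. -/
noncomputable def lowerLocalEntropy (T : X → X) (μ : Measure X) (x : X) : ℝ≥0∞ :=
  ⨆ ε : {ε : ℝ // 0 < ε}, lowerLocalEntropyE T μ x ε.1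

/-- Measure-theoretical upper entropy `h̄_μ(T) = ∫ h̄_μ(T,x) dμ`. -/
noncomputable def upperEntropy (T : X → X) (μ : Measure X) : ℝ≥0∞ :=
  ∫⁻ x, upperLocalEntropy T μ x ∂μ

/-- Measure-theoretical lower entropy `h̲_μ(T) = ∫ h̲_μ(T,x) dμ`. -/
noncomputable def lowerEntropy (T : X → X) (μ : Measure X) : ℝ≥0∞ :=
  ∫⁻ x, lowerLocalEntropy T μ x ∂μ

end MeasDefs

section AuxGeom
variable {X : Type*} [MetricSpace X] {T : X → X}

lemma mem_bowenBall_self {n : ℕ} {x : X} {ε : ℝ} (hε : 0 < ε) :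
    x ∈ bowenBall T n x ε := fun k _ => by simp [hε]

lemma mem_closedBowenBall_self {n : ℕ} {x : X} {ε : ℝ} (hε : 0 ≤ ε) :
    x ∈ closedBowenBall T n x ε := fun k _ => by simp [hε]

lemma bowenBall_subset_closedBowenBall {n : ℕ} {x : X} {ε : ℝ} :
    bowenBall T n x ε ⊆ closedBowenBall T n x ε := fun _ hy k hk => (hy k hk).le

lemma bowenBall_mono {n : ℕ} {x : X} {ε ε' : ℝ} (h : ε ≤ ε') :
    bowenBall T n x ε ⊆ bowenBall T n x ε' := fun _ hy k hk => lt_of_lt_of_le (hy k hk) h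

lemma bowenBall_zero (T : X → X) (x : X) (ε : ℝ) : bowenBall T 0 x ε = Set.univ := by
  ext y; simp [bowenBall]

lemma isOpen_bowenBall (hT : Continuous T) {n : ℕ} {x : X} {ε : ℝ} :
    IsOpen (bowenBall T n x ε) := by
  have h : bowenBall T n x ε = ⋂ k ∈ Finset.range n, (T^[k]) ⁻¹' Metric.ball (T^[k] x) ε := by
    ext y
    simp [bowenBall, Metric.mem_ball, dist_comm]
  rw [h]
  exact isOpen_biInter_finset fun k _ => (Metric.isOpen_ball).preimage (hT.iterate k)

lemma isClosed_closedBowenBall (hT : Continuous T) {n : ℕ} {x : X} {ε : ℝ} :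
    IsClosed (closedBowenBall T n x ε) := by
  have h : closedBowenBall T n x ε
      = ⋂ k ∈ Finset.range n, (T^[k]) ⁻¹' Metric.closedBall (T^[k] x) ε := by
    ext y
    simp [closedBowenBall, Metric.mem_closedBall, dist_comm]
  rw [h]
  exact isClosed_biInter fun k _ => (Metric.isClosed_closedBall).preimage (hT.iterate k)

lemma closedBowenBall_subset_of_meets {n₁ n₂ : ℕ} {x y : X} {δ : ℝ} (hδ : 0 < δ)
    (hn : n₁ ≤ n₂) (hmeet : (closedBowenBall T n₂ y δ ∩ closedBowenBall T n₁ x δ).Nonempty) :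
    closedBowenBall T n₂ y δ ⊆ bowenBall T n₁ x (4 * δ) := by
  obtain ⟨w, hw₂, hw₁⟩ := hmeet
  intro z hz k hk
  have h1 : dist (T^[k] x) (T^[k] w) ≤ δ := hw₁ k hk
  have h2 : dist (T^[k] y) (T^[k] w) ≤ δ := hw₂ k (lt_of_lt_of_le hk hn)
  have h3 : dist (T^[k] y) (T^[k] z) ≤ δ := hz k (lt_of_lt_of_le hk hn)
  calc dist (T^[k] x) (T^[k] z)
      ≤ dist (T^[k] x) (T^[k] w) + dist (T^[k] w) (T^[k] y) + dist (T^[k] y) (T^[k] z) :=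
        dist_triangle4 _ _ _ _
    _ < 4 * δ := by rw [dist_comm (T^[k] w)]; linarith

lemma negLogDiv_antitone {a b : ℝ≥0∞} (hab : a ≤ b) (hb : b ≠ ⊤) (n : ℕ) :
    negLogDiv b n ≤ negLogDiv a n := by
  rcases eq_or_ne a 0 with ha | ha
  · simp [negLogDiv, ha]
  · have hb0 : b ≠ 0 := fun h => ha (le_antisymm (h ▸ hab) zero_le)
    have ha' : a ≠ ⊤ := ne_top_of_le_ne_top hb hab
    rw [negLogDiv, negLogDiv, if_neg hb0, if_neg ha]
    apply ENNReal.ofReal_le_ofReal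
    have hpos : 0 < a.toReal := ENNReal.toReal_pos ha ha'
    have hlog : Real.log a.toReal ≤ Real.log b.toReal :=
      Real.log_le_log hpos ((ENNReal.toReal_le_toReal ha' hb).mpr hab)
    rcases Nat.eq_zero_or_pos n with h0 | hn
    · simp [h0]
    · have hn' : (0:ℝ) < n := Nat.cast_pos.2 hn
      exact div_le_div_of_nonneg_right (by linarith) hn'.le

lemma upperLocalEntropyE_antitone [MeasurableSpace X] {μ : Measure X} [IsFiniteMeasure μ] (T : X → X) (x : X)
    {ε ε' : ℝ} (h : ε ≤ ε') : upperLocalEntropyE T μ x ε' ≤ upperLocalEntropyE T μ x ε := by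
  refine Filter.limsup_le_limsup (Filter.Eventually.of_forall fun n => ?_)
  exact negLogDiv_antitone (measure_mono (bowenBall_mono h)) (measure_ne_top μ _) n

lemma packP_anti_s {s₁ s₂ : ℝ} (h : s₁ ≤ s₂) (N : ℕ) (ε : ℝ) (Z : Set X) :
    packP T s₂ N ε Z ≤ packP T s₁ N ε Z := by
  apply sSup_le
  rintro r ⟨J, x, n, h1, h2, rfl⟩
  refine le_trans (ENNReal.tsum_le_tsum fun i => ENNReal.ofReal_le_ofReal ?_)
    (le_sSup ⟨J, x, n, h1, h2, rfl⟩)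
  refine Real.exp_le_exp.mpr ?_
  have := Nat.cast_nonneg (α := ℝ) (n i.1)
  nlinarith

lemma packPe_anti_s {s₁ s₂ : ℝ} (h : s₁ ≤ s₂) (ε : ℝ) (Z : Set X) :
    packPe T s₂ ε Z ≤ packPe T s₁ ε Z :=
  iInf_mono fun N => packP_anti_s h N ε Z

lemma packMeasE_anti_s {s₁ s₂ : ℝ} (h : s₁ ≤ s₂) (ε : ℝ) (Z : Set X) :
    packMeasE T s₂ ε Z ≤ packMeasE T s₁ ε Z := by
  refine iInf_mono fun Zi => iInf_mono fun _ => ENNReal.tsum_le_tsum fun i => ?_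
  exact packPe_anti_s h ε (Zi i)

end AuxGeom
section Vitali
variable {X : Type*} [MetricSpace X]

lemma vitali_bowen [TopologicalSpace.SeparableSpace X] (T : X → X) (hT : Continuous T)
    (S : Set X) {ε : ℝ} (hε : 0 < ε) (n : X → ℕ) :
    ∃ I : Set X, I ⊆ S ∧ I.Countable ∧
      (I.PairwiseDisjoint fun x => closedBowenBall T (n x) x (ε/4)) ∧
      S ⊆ ⋃ x ∈ I, bowenBall T (n x) x ε := by
  set δ : ℝ := ε / 4 with hδdef
  have hδ : 0 < δ := by positivity
  set C : X → Set X := fun x => closedBowenBall T (n x) x δ with hC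
  -- maximal pairwise disjoint subfamilies exist
  have hmax : ∀ A : Set X, ∃ I, (I ⊆ A ∧ I.PairwiseDisjoint C) ∧
      ∀ J, (J ⊆ A ∧ J.PairwiseDisjoint C) → I ⊆ J → J ⊆ I := by
    intro A
    have hub : ∀ c ⊆ {I | I ⊆ A ∧ I.PairwiseDisjoint C}, IsChain (· ⊆ ·) c →
        ∃ ub ∈ {I | I ⊆ A ∧ I.PairwiseDisjoint C}, ∀ s ∈ c, s ⊆ ub := by
      intro c hc hchain
      refine ⟨⋃₀ c, ⟨?_, ?_⟩, fun s hs => Set.subset_sUnion_of_mem hs⟩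
      · exact Set.sUnion_subset fun s hs => (hc hs).1
      · intro x hx y hy hxy
        obtain ⟨a, ha, hxa⟩ := hx
        obtain ⟨b, hb, hyb⟩ := hy
        rcases hchain.total ha hb with hab | hba
        · exact (hc hb).2 (hab hxa) hyb hxy
        · exact (hc ha).2 hxa (hba hyb) hxy
    obtain ⟨m, hm⟩ := zorn_subset {I | I ⊆ A ∧ I.PairwiseDisjoint C} hub
    exact ⟨m, hm.prop, fun J hJ hmJ => hm.2 hJ hmJ⟩
  choose pick hpick₁ hpick₂ using hmax
  -- stage construction
  set A : Set X → ℕ → Set X :=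
    fun B m => {x ∈ S | n x = m ∧ ∀ b ∈ B, Disjoint (C x) (C b)} with hA
  set F : ℕ → Set X := fun m => Nat.rec ∅ (fun m' Fm' => Fm' ∪ pick (A Fm' m')) m with hF
  have hFsucc : ∀ m, F (m+1) = F m ∪ pick (A (F m) m) := fun m => rfl
  have hFzero : F 0 = ∅ := rfl
  have hFmono : Monotone F := monotone_nat_of_le_succ fun m => by
    rw [hFsucc]; exact Set.subset_union_left
  have hinv : ∀ m, F m ⊆ S ∧ (∀ x ∈ F m, n x < m) ∧ (F m).PairwiseDisjoint C := by
    intro m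
    induction m with
    | zero => simp [hFzero]
    | succ m ih =>
      obtain ⟨ihS, ihn, ihd⟩ := ih
      obtain ⟨hsub, hdisj⟩ := hpick₁ (A (F m) m)
      rw [hFsucc]
      refine ⟨Set.union_subset ihS (fun x hx => (hsub hx).1), ?_, ?_⟩
      · rintro x (hx | hx)
        · exact lt_trans (ihn x hx) (Nat.lt_succ_self m)
        · rw [(hsub hx).2.1]; exact Nat.lt_succ_self m
      · rintro x (hx | hx) y (hy | hy) hxy
        · exact ihd hx hy hxy
        · exact ((hsub hy).2.2 x hx).symm
        · exact (hsub hx).2.2 y hy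
        · exact hdisj hx hy hxy
  set I : Set X := ⋃ m, F m with hI
  have hIS : I ⊆ S := Set.iUnion_subset fun m => (hinv m).1
  have hIdisj : I.PairwiseDisjoint C := by
    intro x hx y hy hxy
    obtain ⟨mx, hmx⟩ := Set.mem_iUnion.1 hx
    obtain ⟨my, hmy⟩ := Set.mem_iUnion.1 hy
    exact (hinv (max mx my)).2.2 (hFmono (le_max_left _ _) hmx)
      (hFmono (le_max_right _ _) hmy) hxy
  have hCne : ∀ x : X, x ∈ C x := fun x => mem_closedBowenBall_self hδ.le
  have hcov : ∀ y ∈ S, ∃ x ∈ I, n x ≤ n y ∧ ¬ Disjoint (C y) (C x) := by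
    intro y hy
    by_cases hprev : ∀ b ∈ F (n y), Disjoint (C y) (C b)
    · have hyA : y ∈ A (F (n y)) (n y) := ⟨hy, rfl, hprev⟩
      by_cases hP : ∀ b ∈ pick (A (F (n y)) (n y)), Disjoint (C y) (C b)
      · by_cases hyP : y ∈ pick (A (F (n y)) (n y))
        · refine ⟨y, Set.mem_iUnion.2 ⟨n y + 1, by rw [hFsucc]; exact Or.inr hyP⟩, le_refl _, ?_⟩
          intro hd
          exact (hd.ne_of_mem (hCne y) (hCne y)) rfl
        · exfalso
          have heq : pick (A (F (n y)) (n y)) ⊆ insert y (pick (A (F (n y)) (n y))) → _ :=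
            hpick₂ (A (F (n y)) (n y)) (insert y (pick (A (F (n y)) (n y))))
              ⟨Set.insert_subset hyA (hpick₁ _).1,
               (hpick₁ _).2.insert fun b hb _ => hP b hb⟩
          exact hyP (heq (Set.subset_insert _ _) (Set.mem_insert y _))
      · push_neg at hP
        obtain ⟨b, hb, hdb⟩ := hP
        refine ⟨b, Set.mem_iUnion.2 ⟨n y + 1, by rw [hFsucc]; exact Or.inr hb⟩,
          (((hpick₁ _).1 hb).2.1).le, hdb⟩
    · push_neg at hprev
      obtain ⟨b, hb, hdb⟩ := hprev
      exact ⟨b, Set.mem_iUnion.2 ⟨n y, hb⟩, ((hinv (n y)).2.1 b hb).le, hdb⟩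
  have hcnt : I.Countable := by
    refine hIdisj.countable_of_nonempty_interior fun x _ => ⟨x, ?_⟩
    have hsub : bowenBall T (n x) x δ ⊆ C x := bowenBall_subset_closedBowenBall
    exact interior_maximal hsub (isOpen_bowenBall hT) (mem_bowenBall_self hδ)
  refine ⟨I, hIS, hcnt, hIdisj, ?_⟩
  intro y hy
  obtain ⟨x, hxI, hnx, hdx⟩ := hcov y hy
  rw [Set.not_disjoint_iff_nonempty_inter] at hdx
  have hsub := closedBowenBall_subset_of_meets hδ hnx hdx
  have hy4 : y ∈ bowenBall T (n x) x (4 * δ) := hsub (hCne y)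
  have h4δ : 4 * δ = ε := by rw [hδdef]; ring
  exact Set.mem_biUnion hxI (h4δ ▸ hy4)

end Vitali
section PackTop
variable {X : Type*} [MetricSpace X]

lemma packPe_top [TopologicalSpace.SeparableSpace X] [MeasurableSpace X]
    (T : X → X) (hT : Continuous T) (μ : Measure X) {Z F : Set X} {ε t t' : ℝ}
    (hε : 0 < ε) (htt' : t' < t)
    (hF : ∀ x ∈ F, ∀ N : ℕ, ∃ n : ℕ, N ≤ n ∧
      μ (bowenBall T n x ε) < ENNReal.ofReal (Real.exp (-t * n)))
    (hpos : 0 < μ (Z ∩ F)) :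
    packPe T t' (ε/4) Z = ⊤ := by
  have hXne : Nonempty X := ⟨(nonempty_of_measure_ne_zero hpos.ne').choose⟩
  set S : Set X := Z ∩ F with hS
  rw [packPe, iInf_eq_top]
  intro N₀
  rw [eq_top_iff]
  have main : ∀ N : ℕ, N₀ ≤ N →
      ENNReal.ofReal (Real.exp ((t - t') * N)) * μ S ≤ packP T t' N₀ (ε/4) Z := by
    intro N hN
    have hn : ∀ x : X, ∃ nx : ℕ, x ∈ S →
        (N ≤ nx ∧ μ (bowenBall T nx x ε) < ENNReal.ofReal (Real.exp (-t * nx))) := by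
      intro x
      by_cases hx : x ∈ S
      · obtain ⟨nx, h1, h2⟩ := hF x hx.2 N
        exact ⟨nx, fun _ => ⟨h1, h2⟩⟩
      · exact ⟨0, fun h => absurd h hx⟩
    choose nf hnf using hn
    obtain ⟨I, hIS, hIcnt, hIdisj, hIcov⟩ := vitali_bowen T hT S hε nf
    haveI := hIcnt.toEncodable
    set g : ℕ → X :=
      fun m => ((Encodable.decode₂ I m).map Subtype.val).getD (Classical.arbitrary X) with hg
    set J : Set ℕ := Set.range (fun i : I => Encodable.encode i) with hJ
    have hgval : ∀ i : I, g (Encodable.encode i) = i.1 := by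
      intro i; simp [hg, Encodable.encodek₂]
    have hgmem : ∀ m ∈ J, g m ∈ I := by
      rintro m ⟨i, rfl⟩
      rw [hgval i]; exact i.2
    have hginj : Set.InjOn g J := by
      rintro m₁ ⟨i₁, rfl⟩ m₂ ⟨i₂, rfl⟩ h
      rw [hgval i₁, hgval i₂] at h
      exact congrArg Encodable.encode (Subtype.ext h)
    have hgim : ∀ x ∈ I, ∃ m ∈ J, g m = x := by
      intro x hx
      exact ⟨Encodable.encode (⟨x, hx⟩ : I), ⟨⟨x, hx⟩, rfl⟩, hgval ⟨x, hx⟩⟩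
    have hr : (∑' i : J, ENNReal.ofReal (Real.exp (-t' * ((fun m => nf (g m)) i.1 : ℝ)))) ∈
        { r : ℝ≥0∞ | ∃ (J' : Set ℕ) (x : ℕ → X) (n : ℕ → ℕ),
          (∀ i ∈ J', x i ∈ Z ∧ N₀ ≤ n i) ∧
          (J'.PairwiseDisjoint fun i => closedBowenBall T (n i) (x i) (ε/4)) ∧
          r = ∑' i : J', ENNReal.ofReal (Real.exp (-t' * ((n i.1 : ℕ) : ℝ))) } := by
      refine ⟨J, g, fun m => nf (g m), ?_, ?_, rfl⟩
      · intro m hm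
        have hSm : g m ∈ S := hIS (hgmem m hm)
        exact ⟨hSm.1, le_trans hN (hnf (g m) hSm).1⟩
      · intro m₁ h₁ m₂ h₂ hne
        exact hIdisj (hgmem _ h₁) (hgmem _ h₂) (fun he => hne (hginj h₁ h₂ he))
    have hSsub : S ⊆ ⋃ m ∈ J, bowenBall T (nf (g m)) (g m) ε := by
      intro y hy
      have := hIcov hy
      obtain ⟨x, hxI, hyx⟩ := Set.mem_iUnion₂.1 this
      obtain ⟨m, hm, hgm⟩ := hgim x hxI
      exact Set.mem_biUnion hm (by rw [hgm]; exact hyx)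
    calc ENNReal.ofReal (Real.exp ((t - t') * N)) * μ S
        ≤ ENNReal.ofReal (Real.exp ((t - t') * N)) *
            ∑' m : J, μ (bowenBall T (nf (g m.1)) (g m.1) ε) := by
          apply mul_le_mul_right
          exact le_trans (measure_mono hSsub) (measure_biUnion_le μ (Set.to_countable J) _)
      _ = ∑' m : J, ENNReal.ofReal (Real.exp ((t - t') * N)) *
            μ (bowenBall T (nf (g m.1)) (g m.1) ε) := ENNReal.tsum_mul_left.symm
      _ ≤ ∑' m : J, ENNReal.ofReal (Real.exp (-t' * (nf (g m.1) : ℝ))) := by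
          refine ENNReal.tsum_le_tsum fun m => ?_
          have hSm : g m.1 ∈ S := hIS (hgmem m.1 m.2)
          obtain ⟨hNn, hμ⟩ := hnf (g m.1) hSm
          calc ENNReal.ofReal (Real.exp ((t - t') * N)) * μ (bowenBall T (nf (g m.1)) (g m.1) ε)
              ≤ ENNReal.ofReal (Real.exp ((t - t') * N)) *
                  ENNReal.ofReal (Real.exp (-t * (nf (g m.1) : ℝ))) := mul_le_mul_right hμ.le _
            _ = ENNReal.ofReal (Real.exp ((t - t') * N) * Real.exp (-t * (nf (g m.1) : ℝ))) :=
                (ENNReal.ofReal_mul (Real.exp_pos _).le).symm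
            _ ≤ ENNReal.ofReal (Real.exp (-t' * (nf (g m.1) : ℝ))) := by
                apply ENNReal.ofReal_le_ofReal
                rw [← Real.exp_add]
                apply Real.exp_le_exp.2
                have h1 : (N : ℝ) ≤ (nf (g m.1) : ℝ) := Nat.cast_le.2 hNn
                nlinarith
      _ ≤ packP T t' N₀ (ε/4) Z := le_sSup hr
  have htend : Filter.Tendsto (fun N : ℕ => ENNReal.ofReal (Real.exp ((t - t') * N)) * μ S)
      atTop (nhds ⊤) := by
    have h1 : Filter.Tendsto (fun N : ℕ => ((t - t') * N : ℝ)) atTop atTop :=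
      Filter.Tendsto.const_mul_atTop (by linarith) tendsto_natCast_atTop_atTop
    have h2 : Filter.Tendsto (fun N : ℕ => ENNReal.ofReal (Real.exp ((t - t') * N)))
        atTop (nhds ⊤) := ENNReal.tendsto_ofReal_atTop.comp (Real.tendsto_exp_atTop.comp h1)
    have h3 := ENNReal.Tendsto.mul_const (b := μ S) h2 (Or.inl ENNReal.top_ne_zero)
    rwa [ENNReal.top_mul hpos.ne'] at h3
  exact le_of_tendsto htend (Filter.eventually_atTop.2 ⟨N₀, main⟩)

end PackTop
section PartA
variable {X : Type*} [MetricSpace X] [MeasurableSpace X] [BorelSpace X]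

lemma partA (T : X → X) (hT : Continuous T) (E : Set X)
    (μ : Measure X) [IsProbabilityMeasure μ] {s : ℝ} (hs : 0 ≤ s)
    (h : ∀ x ∈ E, upperLocalEntropy T μ x ≤ ENNReal.ofReal s) :
    packEntropy T E ≤ ENNReal.ofReal s := by
  have key : ∀ t' : ℝ, s < t' → packEntropy T E ≤ ENNReal.ofReal t' := by
    intro t' ht'
    set t : ℝ := (s + t') / 2 with htdef
    have hst : s < t := by rw [htdef]; linarith
    have htt' : t < t' := by rw [htdef]; linarith
    have ht0 : 0 < t := lt_of_le_of_lt hs hst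
    have hfin : ∀ ε : ℝ, 0 < ε → packMeasE T t' ε E ≠ ⊤ := by
      intro ε hε
      set Es : ℕ → Set X := fun N => {x ∈ E | ∀ n : ℕ, N ≤ n →
        ENNReal.ofReal (Real.exp (-t * n)) ≤ μ (bowenBall T n x ε)} with hEs
      have hcover : E ⊆ ⋃ N, Es N := by
        intro x hx
        have h1 : upperLocalEntropyE T μ x ε ≤ ENNReal.ofReal s := by
          refine le_trans ?_ (h x hx)
          exact le_iSup (fun e : {ε : ℝ // 0 < ε} => upperLocalEntropyE T μ x e.1) ⟨ε, hε⟩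
        have h2 : upperLocalEntropyE T μ x ε < ENNReal.ofReal t :=
          lt_of_le_of_lt h1 ((ENNReal.ofReal_lt_ofReal_iff ht0).2 hst)
        have h3 := Filter.eventually_lt_of_limsup_lt h2
        rw [Filter.eventually_atTop] at h3
        obtain ⟨N, hN⟩ := h3
        refine Set.mem_iUnion.2 ⟨N, hx, fun n hn => ?_⟩
        have h4 := hN n hn
        rcases eq_or_ne (μ (bowenBall T n x ε)) 0 with h0 | h0
        · rw [negLogDiv, if_pos h0] at h4
          exact absurd h4 (by simp)
        rcases Nat.eq_zero_or_pos n with rfl | hn1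
        · rw [bowenBall_zero]
          simp only [Nat.cast_zero, mul_zero, Real.exp_zero, ENNReal.ofReal_one, measure_univ,
            le_refl]
        · rw [negLogDiv, if_neg h0] at h4
          set a : ℝ := (μ (bowenBall T n x ε)).toReal with hadef
          have hapos : 0 < a := ENNReal.toReal_pos h0 (measure_ne_top μ _)
          have h5 : -(Real.log a) / n < t := by
            by_contra h6
            exact absurd h4 (not_lt.2 (ENNReal.ofReal_le_ofReal (not_lt.1 h6)))
          have hn' : (0:ℝ) < n := Nat.cast_pos.2 hn1
          have h7 : -t * n < Real.log a := by
            rw [div_lt_iff₀ hn'] at h5; linarith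
          have h8 : Real.exp (-t * n) < a := by
            calc Real.exp (-t * n) < Real.exp (Real.log a) := Real.exp_lt_exp.2 h7
              _ = a := Real.exp_log hapos
          calc ENNReal.ofReal (Real.exp (-t * n)) ≤ ENNReal.ofReal a :=
                ENNReal.ofReal_le_ofReal h8.le
            _ = μ (bowenBall T n x ε) := ENNReal.ofReal_toReal (measure_ne_top μ _)
      have hbound : ∀ N : ℕ, packPe T t' ε (Es N) ≤
          ENNReal.ofReal (Real.exp (-(t' - t) * N)) := by
        intro N
        refine le_trans (iInf_le _ N) (sSup_le ?_)
        rintro r ⟨J, xf, nf, h1, h2, rfl⟩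
        have hterm : ∀ i : J, ENNReal.ofReal (Real.exp (-t' * (nf i.1 : ℝ))) ≤
            ENNReal.ofReal (Real.exp (-(t' - t) * N)) *
              μ (closedBowenBall T (nf i.1) (xf i.1) ε) := by
          intro i
          obtain ⟨hxZ, hNn⟩ := h1 i.1 i.2
          have hmu : ENNReal.ofReal (Real.exp (-t * (nf i.1 : ℝ))) ≤
              μ (closedBowenBall T (nf i.1) (xf i.1) ε) :=
            le_trans (hxZ.2 (nf i.1) hNn)
              (measure_mono bowenBall_subset_closedBowenBall)
          calc ENNReal.ofReal (Real.exp (-t' * (nf i.1 : ℝ)))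
              ≤ ENNReal.ofReal (Real.exp (-(t' - t) * N) * Real.exp (-t * (nf i.1 : ℝ))) := by
                apply ENNReal.ofReal_le_ofReal
                rw [← Real.exp_add]
                apply Real.exp_le_exp.2
                have hc : (N : ℝ) ≤ (nf i.1 : ℝ) := Nat.cast_le.2 hNn
                nlinarith
            _ = ENNReal.ofReal (Real.exp (-(t' - t) * N)) *
                  ENNReal.ofReal (Real.exp (-t * (nf i.1 : ℝ))) :=
                ENNReal.ofReal_mul (Real.exp_pos _).le
            _ ≤ _ := mul_le_mul_right hmu _
        calc (∑' i : J, ENNReal.ofReal (Real.exp (-t' * (nf i.1 : ℝ))))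
            ≤ ∑' i : J, ENNReal.ofReal (Real.exp (-(t' - t) * N)) *
                μ (closedBowenBall T (nf i.1) (xf i.1) ε) := ENNReal.tsum_le_tsum hterm
          _ = ENNReal.ofReal (Real.exp (-(t' - t) * N)) *
                ∑' i : J, μ (closedBowenBall T (nf i.1) (xf i.1) ε) := ENNReal.tsum_mul_left
          _ ≤ ENNReal.ofReal (Real.exp (-(t' - t) * N)) * 1 := by
              apply mul_le_mul_right
              rw [← measure_biUnion (Set.to_countable J) h2
                (fun b _ => (isClosed_closedBowenBall hT).measurableSet)]
              exact le_trans (measure_mono (Set.subset_univ _)) measure_univ.le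
          _ = ENNReal.ofReal (Real.exp (-(t' - t) * N)) := mul_one _
      have hle : packMeasE T t' ε E ≤ ∑' N : ℕ, packPe T t' ε (Es N) := iInf₂_le Es hcover
      have hgeo : (∑' N : ℕ, ENNReal.ofReal (Real.exp (-(t' - t) * N))) ≠ ⊤ := by
        have hrw : ∀ N : ℕ, ENNReal.ofReal (Real.exp (-(t' - t) * N)) =
            ENNReal.ofReal (Real.exp (-(t' - t))) ^ N := by
          intro N
          rw [← ENNReal.ofReal_pow (Real.exp_pos _).le, ← Real.exp_nat_mul]
          ring_nf
        rw [tsum_congr hrw, ENNReal.tsum_geometric]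
        have hlt : ENNReal.ofReal (Real.exp (-(t' - t))) < 1 := by
          rw [← ENNReal.ofReal_one]
          exact (ENNReal.ofReal_lt_ofReal_iff one_pos).2
            (Real.exp_lt_one_iff.2 (by linarith))
        rw [ENNReal.inv_ne_top]
        intro hz
        rw [tsub_eq_zero_iff_le] at hz
        exact absurd hz (not_le.2 hlt)
      refine ne_top_of_le_ne_top ?_ (le_trans hle (ENNReal.tsum_le_tsum hbound))
      exact hgeo
    rw [packEntropy]
    apply iSup_le
    rintro ⟨ε, hε⟩
    rw [packEntropyE]
    apply iSup_le
    rintro ⟨s', hs'⟩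
    simp only
    by_contra hcon
    push_neg at hcon
    have hcoe : (s' : ℝ≥0∞) = ENNReal.ofReal (s' : ℝ) := ENNReal.ofReal_coe_nnreal.symm
    rw [hcoe] at hcon
    have hlt : t' < (s' : ℝ) :=
      (ENNReal.ofReal_lt_ofReal_iff_of_nonneg (by linarith)).1 hcon
    have hmono := packMeasE_anti_s (T := T) hlt.le ε E
    rw [hs'] at hmono
    exact hfin ε hε (top_le_iff.1 hmono)
  refine ENNReal.le_of_forall_pos_le_add fun δ hδ _ => ?_
  have hδ' : (0:ℝ) < δ := hδ
  calc packEntropy T E ≤ ENNReal.ofReal (s + δ) := key _ (by linarith)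
    _ = ENNReal.ofReal s + ENNReal.ofReal δ := ENNReal.ofReal_add hs hδ'.le
    _ = ENNReal.ofReal s + δ := by rw [ENNReal.ofReal_coe_nnreal]

end PartA
section PartB
variable {X : Type*} [MetricSpace X] [CompactSpace X] [MeasurableSpace X] [BorelSpace X]

lemma partB (T : X → X) (hT : Continuous T) (E : Set X)
    (μ : Measure X) [IsProbabilityMeasure μ] {s : ℝ} (hs : 0 ≤ s)
    (hpos : 0 < μ E) (h : ∀ x ∈ E, ENNReal.ofReal s ≤ upperLocalEntropy T μ x) :
    ENNReal.ofReal s ≤ packEntropy T E := by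
  rcases eq_or_lt_of_le hs with hs0 | hs0
  · rw [← hs0]; simp
  have claim : ∀ t' : ℝ, 0 ≤ t' → t' < s → ENNReal.ofReal t' ≤ packEntropy T E := by
    intro t' ht'0 ht's
    set t : ℝ := (t' + s) / 2 with htdef
    have ht't : t' < t := by rw [htdef]; linarith
    have hts : t < s := by rw [htdef]; linarith
    have ht0 : 0 < t := lt_of_le_of_lt ht'0 ht't
    -- find a uniform scale with positive measure
    set Ek : ℕ → Set X := fun k =>
      {x ∈ E | ENNReal.ofReal t < upperLocalEntropyE T μ x (1 / (k + 1))} with hEk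
    have hmono : Monotone Ek := by
      intro k l hkl x hx
      refine ⟨hx.1, lt_of_lt_of_le hx.2 (upperLocalEntropyE_antitone T x ?_)⟩
      have h1 : (0:ℝ) < k + 1 := by positivity
      have h2 : (k:ℝ) + 1 ≤ (l:ℝ) + 1 := by
        have := Nat.cast_le (α := ℝ).2 hkl
        linarith
      exact one_div_le_one_div_of_le h1 h2
    have hcoverE : E ⊆ ⋃ k, Ek k := by
      intro x hx
      have h2 : ENNReal.ofReal t < upperLocalEntropy T μ x :=
        lt_of_lt_of_le ((ENNReal.ofReal_lt_ofReal_iff hs0).2 hts) (h x hx)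
      rw [upperLocalEntropy, lt_iSup_iff] at h2
      obtain ⟨⟨ε₀, hε₀⟩, hlt⟩ := h2
      obtain ⟨k, hk⟩ := exists_nat_one_div_lt hε₀
      exact Set.mem_iUnion.2
        ⟨k, hx, lt_of_lt_of_le hlt (upperLocalEntropyE_antitone T x hk.le)⟩
    obtain ⟨k, hk⟩ : ∃ k, 0 < μ (Ek k) := by
      by_contra hc
      push_neg at hc
      have h0 : μ (⋃ k, Ek k) = 0 := by
        rw [hmono.measure_iUnion]
        simp only [nonpos_iff_eq_zero] at hc
        simp [hc]
      exact absurd (le_trans (measure_mono hcoverE) h0.le) (not_le.2 hpos)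
    set ε : ℝ := 1 / (k + 1) with hεdef
    have hε : 0 < ε := by positivity
    set F : Set X := Ek k with hFdef
    have hF : ∀ x ∈ F, ∀ N : ℕ, ∃ n : ℕ, N ≤ n ∧
        μ (bowenBall T n x ε) < ENNReal.ofReal (Real.exp (-t * n)) := by
      intro x hx N
      have hfr : ∃ᶠ n in Filter.atTop,
          ENNReal.ofReal t < negLogDiv (μ (bowenBall T n x ε)) n :=
        Filter.frequently_lt_of_lt_limsup (by isBoundedDefault) hx.2
      rw [Filter.frequently_atTop] at hfr
      obtain ⟨n, hn, hlt⟩ := hfr (max N 1)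
      refine ⟨n, le_trans (le_max_left _ _) hn, ?_⟩
      have hn1 : 1 ≤ n := le_trans (le_max_right _ _) hn
      rcases eq_or_ne (μ (bowenBall T n x ε)) 0 with h0 | h0
      · rw [h0]
        exact ENNReal.ofReal_pos.2 (Real.exp_pos _)
      · rw [negLogDiv, if_neg h0] at hlt
        set a : ℝ := (μ (bowenBall T n x ε)).toReal with hadef
        have h5 : t < -(Real.log a) / n :=
          (ENNReal.ofReal_lt_ofReal_iff_of_nonneg ht0.le).1 hlt
        have hn' : (0:ℝ) < n := Nat.cast_pos.2 hn1
        have h6 : Real.log a < -t * n := by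
          rw [lt_div_iff₀ hn'] at h5; linarith
        have hapos : 0 < a := ENNReal.toReal_pos h0 (measure_ne_top μ _)
        have h7 : a < Real.exp (-t * n) := (Real.log_lt_iff_lt_exp hapos).1 h6
        calc μ (bowenBall T n x ε) = ENNReal.ofReal a :=
              (ENNReal.ofReal_toReal (measure_ne_top μ _)).symm
          _ < ENNReal.ofReal (Real.exp (-t * n)) :=
              (ENNReal.ofReal_lt_ofReal_iff (Real.exp_pos _)).2 h7
    -- packing pre-measure is infinite
    have hMeas : packMeasE T t' (ε/4) E = ⊤ := by
      rw [packMeasE, iInf_eq_top]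
      intro Zi
      rw [iInf_eq_top]
      intro hZi
      have hFsub : F ⊆ ⋃ i, (Zi i ∩ F) := by
        intro x hx
        obtain ⟨i, hi⟩ := Set.mem_iUnion.1 (hZi hx.1)
        exact Set.mem_iUnion.2 ⟨i, hi, hx⟩
      obtain ⟨i, hi⟩ : ∃ i, 0 < μ (Zi i ∩ F) := by
        by_contra hc
        push_neg at hc
        simp only [nonpos_iff_eq_zero] at hc
        have h0 : μ F = 0 := by
          refine le_antisymm (le_trans (measure_mono hFsub) ?_) zero_le
          refine le_trans (measure_iUnion_le _) ?_
          simp [hc]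
        exact absurd h0 hk.ne'
      have htop := packPe_top T hT μ hε ht't hF hi
      rw [eq_top_iff]
      exact le_trans htop.ge (ENNReal.le_tsum i)
    have h1 : ENNReal.ofReal t' ≤ packEntropyE T (ε/4) E := by
      have hidx : packMeasE T ((t'.toNNReal : ℝ≥0) : ℝ) (ε/4) E = ⊤ := by
        rwa [Real.coe_toNNReal _ ht'0]
      refine le_trans ?_
        (le_iSup (fun s' : {s' : ℝ≥0 // packMeasE T (s' : ℝ) (ε/4) E = ⊤} => (s'.1 : ℝ≥0∞))
          ⟨t'.toNNReal, hidx⟩)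
      exact le_rfl
    exact le_trans h1
      (le_iSup (fun e : {ε : ℝ // 0 < ε} => packEntropyE T e.1 E) ⟨ε/4, by positivity⟩)
  by_contra hcon
  push_neg at hcon
  obtain ⟨c, hc1, hc2⟩ := exists_between hcon
  have hcne : c ≠ ⊤ := (lt_of_lt_of_le hc2 le_top).ne  -- c < ofReal s ≤ ⊤
  have h1 : c.toReal < s := ENNReal.toReal_lt_of_lt_ofReal hc2
  have h2 := claim c.toReal ENNReal.toReal_nonneg h1
  rw [ENNReal.ofReal_toReal hcne] at h2
  exact absurd h2 (not_le.2 hc1)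

end PartB
/-- (a) If `h̄_μ(T,x) ≤ s` for all `x ∈ E` then `h^P_top(T,E) ≤ s`.
(b) If `μ(E) > 0` and `h̄_μ(T,x) ≥ s` for all `x ∈ E` then `h^P_top(T,E) ≥ s`. -/
theorem stmt4 {X : Type*} [MetricSpace X] [CompactSpace X] [MeasurableSpace X] [BorelSpace X]
    (T : X → X) (hT : Continuous T)
    (E : Set X) (hE : MeasureTheory.AnalyticSet E)
    (μ : Measure X) (hprob : IsProbabilityMeasure μ) (s : ℝ) (hs : 0 ≤ s) :
    ((∀ x ∈ E, upperLocalEntropy T μ x ≤ ENNReal.ofReal s) →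
      packEntropy T E ≤ ENNReal.ofReal s) ∧
    ((0 < μ E ∧ ∀ x ∈ E, ENNReal.ofReal s ≤ upperLocalEntropy T μ x) →
      ENNReal.ofReal s ≤ packEntropy T E) := by
  haveI := hprob
  constructor
  · exact fun h => partA T hT E μ hs h
  · rintro ⟨hpos, h⟩
    exact partB T hT E μ hs hpos h
end

section
/- Let (X,T) be a topological dynamical system, Z ⊂ X an analytic set with h^B_top(T,Z) > 0, and suppose there exists a gauge function b : ℕ → ℝ_{>0} such that M^b(Z) > 0 and lim_{n→∞} e^{ns} b(n) = 0 for every s < h^B_top(T,Z). Then Z has no increasing countable slice of Bowen entropy: Z cannot be written as a countable union of analytic sets Z_i with h^B_top(T,Z_i) < h^B_top(T,Z) for all i. -/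
open Filter Set MeasureTheory Topology
open scoped ENNReal NNReal

section Aux
variable {X : Type*} [MetricSpace X]

/-- `bowenM` is monotone in the level `N`. -/
lemma bowenM_mono_N (T : X → X) (b : ℕ → ℝ) {N N' : ℕ} (h : N ≤ N') (ε : ℝ) (Z : Set X) :
    bowenM T b N ε Z ≤ bowenM T b N' ε Z := by
  apply sInf_le_sInf
  rintro r ⟨x, n, hn, hcov, hr⟩
  exact ⟨x, n, fun i => h.trans (hn i), hcov, hr⟩

lemma bowenM_le_bowenMe (T : X → X) (b : ℕ → ℝ) (N : ℕ) (ε : ℝ) (Z : Set X) :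
    bowenM T b N ε Z ≤ bowenMe T b ε Z :=
  le_iSup (fun N => bowenM T b N ε Z) N

/-- Gauge comparison: if `M^{g}_ε(Z)` is finite and `b = o(g)` along a suitable
comparison, then `M^b_ε(Z) = 0`. -/
lemma bowenMe_eq_zero_of_decay (T : X → X) (b g : ℕ → ℝ) (ε : ℝ) (Z : Set X)
    (hg : ∀ n, 0 < g n)
    (hfin : bowenMe T g ε Z ≠ ⊤)
    (hsmall : ∀ δ : ℝ, 0 < δ → ∀ᶠ n in atTop, b n ≤ δ * g n) :
    bowenMe T b ε Z = 0 := by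
  have key : ∀ N : ℕ, bowenM T b N ε Z = 0 := by
    intro N
    have h0 : bowenM T b N ε Z ≤ 0 := by
      apply ENNReal.le_of_forall_pos_le_add
      intro η hη _
      set C : ℝ≥0∞ := bowenMe T g ε Z + 1 with hC
      have hCne : C ≠ ⊤ := by
        simp only [hC]
        exact ENNReal.add_ne_top.2 ⟨hfin, ENNReal.one_ne_top⟩
      have hC1 : (1 : ℝ≥0∞) ≤ C := le_add_self
      have hCpos : 0 < C.toReal := by
        have := ENNReal.toReal_mono hCne hC1
        simpa using lt_of_lt_of_le one_pos this
      set δ : ℝ := (η : ℝ) / (2 * C.toReal) with hδdef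
      have hδpos : 0 < δ := div_pos hη (by positivity)
      obtain ⟨N₀, hN₀⟩ := (eventually_atTop.1 (hsmall δ hδpos))
      set N' : ℕ := max N N₀ with hN'
      -- get a cover for the gauge g at level N' with sum < C
      have hlt : bowenM T g N' ε Z < C := by
        calc bowenM T g N' ε Z ≤ bowenMe T g ε Z := bowenM_le_bowenMe T g N' ε Z
          _ < C := ENNReal.lt_add_right hfin one_ne_zero
      obtain ⟨r, ⟨x, n, hn, hcov, hr⟩, hrC⟩ := sInf_lt_iff.1 hlt
      have hmem : (∑' i, ENNReal.ofReal (b (n i))) ∈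
          { r : ℝ≥0∞ | ∃ (x : ℕ → X) (n : ℕ → ℕ), (∀ i, N ≤ n i) ∧
            Z ⊆ ⋃ i, bowenBall T (n i) (x i) ε ∧ r = ∑' i, ENNReal.ofReal (b (n i)) } :=
        ⟨x, n, fun i => le_trans (le_max_left _ _) (hn i), hcov, rfl⟩
      have hsum : (∑' i, ENNReal.ofReal (b (n i))) ≤ ENNReal.ofReal δ * r := by
        rw [hr, ← ENNReal.tsum_mul_left]
        apply ENNReal.tsum_le_tsum
        intro i
        rw [← ENNReal.ofReal_mul hδpos.le]
        exact ENNReal.ofReal_le_ofReal (hN₀ (n i) (le_trans (le_max_right _ _) (hn i)))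
      have hfinal : ENNReal.ofReal δ * r ≤ (η : ℝ≥0∞) := by
        calc ENNReal.ofReal δ * r ≤ ENNReal.ofReal δ * C :=
              by gcongr
          _ = ENNReal.ofReal δ * ENNReal.ofReal C.toReal := by
              rw [ENNReal.ofReal_toReal hCne]
          _ = ENNReal.ofReal (δ * C.toReal) := (ENNReal.ofReal_mul hδpos.le).symm
          _ = ENNReal.ofReal ((η : ℝ) / 2) := by
              congr 1
              rw [hδdef]
              field_simp [hCpos.ne']
          _ ≤ ENNReal.ofReal (η : ℝ) := ENNReal.ofReal_le_ofReal (half_le_self η.coe_nonneg)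
          _ = (η : ℝ≥0∞) := ENNReal.ofReal_coe_nnreal
      calc bowenM T b N ε Z ≤ ∑' i, ENNReal.ofReal (b (n i)) := sInf_le hmem
        _ ≤ (η : ℝ≥0∞) := hsum.trans hfinal
        _ = 0 + η := (zero_add _).symm
    exact le_antisymm h0 zero_le
  simp [bowenMe, key]

/-- Countable subadditivity consequence: if each piece has zero `M^b_ε`, so does
the union. -/
lemma bowenMe_union_eq_zero (T : X → X) (b : ℕ → ℝ) (ε : ℝ) (Zi : ℕ → Set X)
    (hzero : ∀ i, bowenMe T b ε (Zi i) = 0) :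
    bowenMe T b ε (⋃ i, Zi i) = 0 := by
  have key : ∀ N : ℕ, bowenM T b N ε (⋃ i, Zi i) = 0 := by
    intro N
    have h0 : bowenM T b N ε (⋃ i, Zi i) ≤ 0 := by
      apply ENNReal.le_of_forall_pos_le_add
      intro η hη _
      have hchoice : ∀ i : ℕ, ∃ (x : ℕ → X) (n : ℕ → ℕ), (∀ j, N ≤ n j) ∧
          Zi i ⊆ ⋃ j, bowenBall T (n j) (x j) ε ∧
          (∑' j, ENNReal.ofReal (b (n j))) < (η : ℝ≥0∞) * (2 : ℝ≥0∞)⁻¹ ^ (i + 1) := by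
        intro i
        have hz : bowenM T b N ε (Zi i) = 0 :=
          le_antisymm ((bowenM_le_bowenMe T b N ε (Zi i)).trans (hzero i).le) zero_le
        have hlt : bowenM T b N ε (Zi i) < (η : ℝ≥0∞) * (2 : ℝ≥0∞)⁻¹ ^ (i + 1) := by
          rw [hz]
          exact ENNReal.mul_pos (by simpa using hη.ne')
            (pow_ne_zero _ (by norm_num : (2:ℝ≥0∞)⁻¹ ≠ 0))
        obtain ⟨r, ⟨x, n, hn, hcov, hr⟩, hrlt⟩ := sInf_lt_iff.1 hlt
        exact ⟨x, n, hn, hcov, hr ▸ hrlt⟩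
      choose x n hn hcov hsum using hchoice
      -- combine covers via pairing
      set x' : ℕ → X := fun k => x (Nat.unpair k).1 (Nat.unpair k).2 with hx'
      set n' : ℕ → ℕ := fun k => n (Nat.unpair k).1 (Nat.unpair k).2 with hn'
      have hmem : (∑' k, ENNReal.ofReal (b (n' k))) ∈
          { r : ℝ≥0∞ | ∃ (x : ℕ → X) (m : ℕ → ℕ), (∀ i, N ≤ m i) ∧
            (⋃ i, Zi i) ⊆ ⋃ i, bowenBall T (m i) (x i) ε ∧
            r = ∑' i, ENNReal.ofReal (b (m i)) } := by
        refine ⟨x', n', fun k => hn _ _, ?_, rfl⟩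
        intro z hz
        obtain ⟨i, hzi⟩ := Set.mem_iUnion.1 hz
        obtain ⟨j, hj⟩ := Set.mem_iUnion.1 (hcov i hzi)
        apply Set.mem_iUnion.2
        refine ⟨Nat.pair i j, ?_⟩
        simp only [hx', hn', Nat.unpair_pair]
        exact hj
      have hsum' : (∑' k, ENNReal.ofReal (b (n' k))) ≤ (η : ℝ≥0∞) := by
        have hequiv : (∑' k, ENNReal.ofReal (b (n' k))) =
            ∑' p : ℕ × ℕ, ENNReal.ofReal (b (n p.1 p.2)) := by
          rw [← Nat.pairEquiv.tsum_eq (f := fun k => ENNReal.ofReal (b (n' k)))]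
          apply tsum_congr
          intro p
          show ENNReal.ofReal (b (n' (Nat.pair p.1 p.2))) = _
          simp [hn', Nat.unpair_pair]
        rw [hequiv, ENNReal.tsum_prod']
        calc (∑' i, ∑' j, ENNReal.ofReal (b (n i j)))
            ≤ ∑' i : ℕ, (η : ℝ≥0∞) * (2 : ℝ≥0∞)⁻¹ ^ (i + 1) :=
              ENNReal.tsum_le_tsum fun i => (hsum i).le
          _ = (η : ℝ≥0∞) * ∑' i : ℕ, (2 : ℝ≥0∞)⁻¹ ^ (i + 1) := ENNReal.tsum_mul_left
          _ = (η : ℝ≥0∞) * ((2 : ℝ≥0∞)⁻¹ * ∑' i : ℕ, (2 : ℝ≥0∞)⁻¹ ^ i) := by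
              congr 1
              rw [← ENNReal.tsum_mul_left]
              exact tsum_congr fun i => (pow_succ' _ _)
          _ = (η : ℝ≥0∞) := by
              rw [ENNReal.tsum_geometric]
              norm_num
              rw [ENNReal.inv_mul_cancel (by norm_num) (by norm_num), mul_one]
      calc bowenM T b N ε (⋃ i, Zi i) ≤ ∑' k, ENNReal.ofReal (b (n' k)) := sInf_le hmem
        _ ≤ (η : ℝ≥0∞) := hsum'
        _ = 0 + η := (zero_add _).symm
    exact le_antisymm h0 zero_le
  simp [bowenMe, key]

end Aux

/-- If there is a gauge function `b` with `M^b(Z) > 0` and `e^{ns} b(n) → 0` for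
every `s < h^B_top(T,Z)`, then `Z` has no increasing countable slice of Bowen
entropy. -/
theorem stmt7 {X : Type*} [MetricSpace X] [CompactSpace X] [MeasurableSpace X] [BorelSpace X]
    (T : X → X) (hT : Continuous T)
    (Z : Set X) (hZ : MeasureTheory.AnalyticSet Z) (hpos : 0 < bowenEntropy T Z)
    (b : ℕ → ℝ) (hb : GaugeSeq b)
    (hMb : 0 < bowenMFull T b Z)
    (hdecay : ∀ s : ℝ, ENNReal.ofReal s < bowenEntropy T Z →
      Tendsto (fun n : ℕ => Real.exp ((n : ℝ) * s) * b n) atTop (nhds 0)) :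
    ¬ ∃ Zi : ℕ → Set X, (∀ i, MeasureTheory.AnalyticSet (Zi i)) ∧
        Z = ⋃ i, Zi i ∧ ∀ i, bowenEntropy T (Zi i) < bowenEntropy T Z := by
  rintro ⟨Zi, hZi, hZeq, hlt⟩
  obtain ⟨ε, hε⟩ := lt_iSup_iff.1 hMb
  have hzero : ∀ i, bowenMe T b ε.1 (Zi i) = 0 := by
    intro i
    obtain ⟨c, hc1, hc2⟩ := exists_between (hlt i)
    have hcne : c ≠ ⊤ := (hc2.trans_le le_top).ne
    set s : ℝ := c.toReal with hs_def
    have hs : ENNReal.ofReal s = c := ENNReal.ofReal_toReal hcne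
    have hfin : bowenMe T (fun n => Real.exp (-s * (n : ℝ))) ε.1 (Zi i) ≠ ⊤ := by
      intro h
      set s' : ℝ≥0 := c.toNNReal with hs'_def
      have hcoe : (s' : ℝ) = s := rfl
      have h' : bowenMe T (fun n => Real.exp (-(s' : ℝ) * (n : ℝ))) ε.1 (Zi i) = ⊤ := by
        rw [hcoe]; exact h
      have h1 : (s' : ℝ≥0∞) ≤ bowenEntropyE T ε.1 (Zi i) :=
        le_iSup (fun t : {t : ℝ≥0 //
          bowenMe T (fun n => Real.exp (-(t : ℝ) * (n : ℝ))) ε.1 (Zi i) = ⊤} =>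
            (t.1 : ℝ≥0∞)) ⟨s', h'⟩
      have h2 : bowenEntropyE T ε.1 (Zi i) ≤ bowenEntropy T (Zi i) :=
        le_iSup (fun e : {e : ℝ // 0 < e} => bowenEntropyE T e.1 (Zi i)) ε
      have hcc : (s' : ℝ≥0∞) = c := ENNReal.coe_toNNReal hcne
      exact absurd ((hcc ▸ (h1.trans h2)).trans_lt hc1) (lt_irrefl c)
    have hdec := hdecay s (hs ▸ hc2)
    apply bowenMe_eq_zero_of_decay T b (fun n => Real.exp (-s * (n : ℝ))) ε.1 (Zi i)
      (fun n => Real.exp_pos _) hfin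
    intro δ hδ
    filter_upwards [hdec.eventually (gt_mem_nhds hδ)] with n hn
    have hid : Real.exp (-s * (n : ℝ)) * Real.exp ((n : ℝ) * s) = 1 := by
      rw [← Real.exp_add, show -s * (n : ℝ) + (n : ℝ) * s = 0 by ring, Real.exp_zero]
    calc b n = (Real.exp (-s * (n : ℝ)) * Real.exp ((n : ℝ) * s)) * b n := by
          rw [hid, one_mul]
      _ = Real.exp (-s * (n : ℝ)) * (Real.exp ((n : ℝ) * s) * b n) := by ring
      _ ≤ Real.exp (-s * (n : ℝ)) * δ :=
          mul_le_mul_of_nonneg_left hn.le (Real.exp_nonneg _)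
      _ = δ * Real.exp (-s * (n : ℝ)) := mul_comm _ _
  have hz0 : bowenMe T b ε.1 Z = 0 := by
    rw [hZeq]; exact bowenMe_union_eq_zero T b ε.1 Zi hzero
  exact absurd hz0 hε.ne'
end

section
/- Let (X,T) be a topological dynamical system, K ⊂ X a compact set, b a gauge function on ℕ, and N ∈ ℕ, ε > 0. Then M^b_{N,3ε}(K) ≤ W^b_{N,ε}(K) ≤ M^b_{N,ε}(K), where W is the weighted Bowen-ball covering quantity. Consequently M^b(K) = W^b(K). -/
open Filter Set MeasureTheory Topology
open scoped ENNReal NNReal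

section AuxStmt9

open scoped Classical

variable {X : Type*} [MetricSpace X]

lemma mem_bowenBall_self9 {ε : ℝ} (hε : 0 < ε) (T : X → X) (n : ℕ) (x : X) :
    x ∈ bowenBall T n x ε := fun _ _ => by simpa using hε

lemma isOpen_bowenBall9 {T : X → X} (hT : Continuous T) (n : ℕ) (x : X) (ε : ℝ) :
    IsOpen (bowenBall T n x ε) := by
  have h : bowenBall T n x ε = ⋂ k ∈ Finset.range n, (T^[k]) ⁻¹' Metric.ball (T^[k] x) ε := by
    ext y
    simp [bowenBall, Metric.mem_ball, dist_comm]
  rw [h]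
  exact isOpen_biInter_finset fun k _ => Metric.isOpen_ball.preimage (hT.iterate k)

lemma bowenBall_subset_triple9 {T : X → X} {n n' : ℕ} {x x' : X} {ε : ℝ}
    (hle : n' ≤ n) (hne : (bowenBall T n x ε ∩ bowenBall T n' x' ε).Nonempty) :
    bowenBall T n x ε ⊆ bowenBall T n' x' (3 * ε) := by
  obtain ⟨w, hw1, hw2⟩ := hne
  intro z hz k hk
  have h1 := hw2 k hk
  have h2 := hw1 k (lt_of_lt_of_le hk hle)
  have h3 := hz k (lt_of_lt_of_le hk hle)
  calc dist (T^[k] x') (T^[k] z)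
      ≤ dist (T^[k] x') (T^[k] w) + dist (T^[k] w) (T^[k] x) + dist (T^[k] x) (T^[k] z) :=
        dist_triangle4 _ _ _ _
    _ < ε + ε + ε := by
        rw [dist_comm (T^[k] w)]
        exact add_lt_add (add_lt_add h1 h2) h3
    _ = 3 * ε := by ring

lemma countP_replicate9 {β : Type*} (pred : β → Prop) [DecidablePred pred] (k : ℕ) (a : β) :
    Multiset.countP pred (Multiset.replicate k a) = if pred a then k else 0 := by
  induction k with
  | zero => simp
  | succ k ih =>
      rw [Multiset.replicate_succ, Multiset.countP_cons, ih]
      split <;> simp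

lemma countP_bind_replicate9 {α β : Type*} (pred : β → Prop) [DecidablePred pred]
    (I : Multiset α) (p : α → ℕ) (v : α → β) :
    Multiset.countP pred (I.bind fun i => Multiset.replicate (p i) (v i))
      = (I.map fun i => if pred (v i) then p i else 0).sum := by
  induction I using Multiset.induction_on with
  | empty => simp
  | cons a s ih => simp [Multiset.cons_bind, Multiset.countP_add, ih, countP_replicate9]

lemma sum_map_bind_replicate9 {α β : Type*} (I : Multiset α) (p : α → ℕ) (v : α → β)
    (F : β → ℝ≥0∞) :
    ((I.bind fun i => Multiset.replicate (p i) (v i)).map F).sum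
      = (I.map fun i => (p i : ℝ≥0∞) * F (v i)).sum := by
  induction I using Multiset.induction_on with
  | empty => simp
  | cons a s ih =>
      simp [Multiset.cons_bind, ih, Multiset.map_replicate, Multiset.sum_replicate,
        nsmul_eq_mul]

/-- Padding: a sequence of Bowen-ball orders `≥ N` whose total `b`-cost is at most `t`. -/
lemma pad_exists9 {b : ℕ → ℝ} (hb : Filter.Tendsto b atTop (nhds 0)) (N : ℕ) {t : ℝ}
    (ht : 0 < t) :
    ∃ pad : ℕ → ℕ, (∀ i, N ≤ pad i) ∧ ∑' i, ENNReal.ofReal (b (pad i)) ≤ ENNReal.ofReal t := by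
  have h : ∀ i : ℕ, ∃ m, N ≤ m ∧ b m < t / 2 / 2 ^ i := by
    intro i
    have ht' : 0 < t / 2 / 2 ^ i := by positivity
    exact ((eventually_ge_atTop N).and (hb.eventually (gt_mem_nhds ht'))).exists
  choose pad hpadN hpadlt using h
  refine ⟨pad, hpadN, ?_⟩
  calc ∑' i, ENNReal.ofReal (b (pad i))
      ≤ ∑' i, ENNReal.ofReal (t / 2 / 2 ^ i) :=
        ENNReal.tsum_le_tsum fun i => ENNReal.ofReal_le_ofReal (hpadlt i).le
    _ = ENNReal.ofReal (∑' i : ℕ, t / 2 / 2 ^ i) :=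
        (ENNReal.ofReal_tsum_of_nonneg (fun i => by positivity)
          (summable_geometric_two' t)).symm
    _ = ENNReal.ofReal t := by rw [tsum_geometric_two']

/-- Sum of a function over initial segment via `getD`. -/
lemma sum_range_getD9 {β M : Type*} [AddCommMonoid M] (l : List β) (d : β) (F : β → M) :
    ∑ i ∈ Finset.range l.length, F (l.getD i d) = (l.map F).sum := by
  induction l with
  | nil => simp
  | cons a l ih =>
      rw [List.length_cons, Finset.sum_range_succ']
      simp only [List.getD_cons_succ, List.getD_cons_zero, List.map_cons, List.sum_cons, ih]
      exact add_comm _ _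

/-- Upper bound on `bowenM` from a finite (multiset) cover by Bowen balls. -/
lemma bowenM_le_multiset9 [Nonempty X] {T : X → X} {b : ℕ → ℝ} (hb : GaugeSeq b) {N : ℕ}
    {r : ℝ} {K : Set X} (S : Multiset (ℕ × X)) (hN : ∀ p ∈ S, N ≤ p.1)
    (hcov : ∀ z ∈ K, ∃ p ∈ S, z ∈ bowenBall T p.1 p.2 r) :
    bowenM T b N r K ≤ (S.map fun p => ENNReal.ofReal (b p.1)).sum := by
  apply ENNReal.le_of_forall_pos_le_add
  intro η hη _
  obtain ⟨pad, hpadN, hpadsum⟩ := pad_exists9 hb.2.2 N (t := (η : ℝ)) (by exact_mod_cast hη)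
  set l := S.toList with hl
  set d : ℕ × X := (N, Classical.arbitrary X) with hd
  set n : ℕ → ℕ := fun i => if i < l.length then (l.getD i d).1 else pad i with hn
  set x : ℕ → X := fun i => (l.getD i d).2 with hx
  have hmem : ∑' i, ENNReal.ofReal (b (n i)) ∈
      { r' : ℝ≥0∞ | ∃ (x : ℕ → X) (n : ℕ → ℕ), (∀ i, N ≤ n i) ∧
        K ⊆ ⋃ i, bowenBall T (n i) (x i) r ∧ r' = ∑' i, ENNReal.ofReal (b (n i)) } := by
    refine ⟨x, n, ?_, ?_, rfl⟩
    · intro i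
      by_cases h : i < l.length
      · have hmem' : l.getD i d ∈ S := by
          rw [← Multiset.mem_toList]
          show l.getD i d ∈ l
          rw [List.getD_eq_getElem l d h]
          exact List.getElem_mem h
        show N ≤ if i < l.length then (l.getD i d).1 else pad i
        rw [if_pos h]
        exact hN _ hmem'
      · show N ≤ if i < l.length then (l.getD i d).1 else pad i
        rw [if_neg h]
        exact hpadN i
    · intro z hz
      obtain ⟨p, hpS, hpz⟩ := hcov z hz
      obtain ⟨i, hi, hget⟩ := List.getElem_of_mem ((Multiset.mem_toList).mpr hpS)
      refine Set.mem_iUnion.mpr ⟨i, ?_⟩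
      have hgd : l.getD i d = p := by rw [List.getD_eq_getElem l d hi, hget]
      show z ∈ bowenBall T (if i < l.length then (l.getD i d).1 else pad i) ((l.getD i d).2) r
      rw [if_pos hi, hgd]
      exact hpz
  have hinf : bowenM T b N r K ≤ ∑' i, ENNReal.ofReal (b (n i)) := sInf_le hmem
  refine hinf.trans ?_
  have hbound : ∀ i, ENNReal.ofReal (b (n i)) ≤
      (if i < l.length then ENNReal.ofReal (b (l.getD i d).1) else 0)
        + ENNReal.ofReal (b (pad i)) := by
    intro i
    by_cases h : i < l.length
    · simp only [hn, if_pos h]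
      exact le_add_of_nonneg_right zero_le
    · simp only [hn, if_neg h]
      exact le_add_of_nonneg_left zero_le
  calc ∑' i, ENNReal.ofReal (b (n i))
      ≤ ∑' i, ((if i < l.length then ENNReal.ofReal (b (l.getD i d).1) else 0)
          + ENNReal.ofReal (b (pad i))) := ENNReal.tsum_le_tsum hbound
    _ = (∑' i, (if i < l.length then ENNReal.ofReal (b (l.getD i d).1) else 0))
          + ∑' i, ENNReal.ofReal (b (pad i)) := ENNReal.tsum_add
    _ ≤ (S.map fun p => ENNReal.ofReal (b p.1)).sum + ↑η := by
        refine add_le_add ?_ (by simpa using hpadsum)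
        rw [tsum_eq_sum (s := Finset.range l.length)
          (fun i hi => by rw [if_neg (by simpa using hi)])]
        rw [Finset.sum_congr rfl fun i hi => if_pos (Finset.mem_range.mp hi)]
        rw [sum_range_getD9 l d (fun p => ENNReal.ofReal (b p.1))]
        rw [← Multiset.sum_coe, ← Multiset.map_coe, hl, Multiset.coe_toList]

/-- Vitali-type greedy selection of a disjoint subfamily. -/
lemma greedy9 {T : X → X} {ε : ℝ} (hε : 0 < ε) (L : Multiset (ℕ × X)) :
    ∃ S : Multiset (ℕ × X), S ≤ L ∧
      (∀ z : X, Multiset.countP (fun p => z ∈ bowenBall T p.1 p.2 ε) S ≤ 1) ∧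
      (∀ p ∈ L, ∃ s ∈ S, s.1 ≤ p.1 ∧
        (bowenBall T p.1 p.2 ε ∩ bowenBall T s.1 s.2 ε).Nonempty) := by
  induction L using Multiset.strongInductionOn with
  | _ L IH =>
    rcases eq_or_ne L 0 with rfl | hL0
    · exact ⟨0, le_rfl, fun z => by simp, fun p hp => absurd hp (by simp)⟩
    · obtain ⟨p₀, hp₀L⟩ := Multiset.exists_mem_of_ne_zero hL0
      have hFne : ((L.map Prod.fst).toFinset).Nonempty :=
        ⟨p₀.1, Multiset.mem_toFinset.mpr (Multiset.mem_map_of_mem _ hp₀L)⟩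
      set m := ((L.map Prod.fst).toFinset).min' hFne with hm
      have hmmem : m ∈ (L.map Prod.fst).toFinset := Finset.min'_mem _ _
      obtain ⟨p, hpL, hpm⟩ := Multiset.mem_map.mp (Multiset.mem_toFinset.mp hmmem)
      have hmin : ∀ p' ∈ L, p.1 ≤ p'.1 := by
        intro p' hp'
        rw [hpm]
        exact Finset.min'_le _ _ (Multiset.mem_toFinset.mpr (Multiset.mem_map_of_mem _ hp'))
      set L'' := (L.erase p).filter
        (fun q => Disjoint (bowenBall T q.1 q.2 ε) (bowenBall T p.1 p.2 ε)) with hL''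
      have hlt : L'' < L :=
        lt_of_le_of_lt (Multiset.filter_le _ _) (Multiset.erase_lt.mpr hpL)
      obtain ⟨S', hS'le, hS'cnt, hS'touch⟩ := IH L'' hlt
      refine ⟨p ::ₘ S', ?_, ?_, ?_⟩
      · calc p ::ₘ S' ≤ p ::ₘ L.erase p :=
              Multiset.cons_le_cons p (hS'le.trans (Multiset.filter_le _ _))
          _ = L := Multiset.cons_erase hpL
      · intro z
        rw [Multiset.countP_cons]
        by_cases hz : z ∈ bowenBall T p.1 p.2 ε
        · have h0 : Multiset.countP (fun q => z ∈ bowenBall T q.1 q.2 ε) S' = 0 := by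
            rw [Multiset.countP_eq_zero]
            intro s hs hzs
            have hsL'' := Multiset.mem_of_le hS'le hs
            have hdisj := Multiset.of_mem_filter hsL''
            exact (Set.disjoint_left.mp hdisj) hzs hz
          simp [h0, hz]
        · simp only [hz, if_false, add_zero]
          exact hS'cnt z
      · intro p' hp'
        by_cases hd : Disjoint (bowenBall T p'.1 p'.2 ε) (bowenBall T p.1 p.2 ε)
        · have hne : p' ≠ p := by
            rintro rfl
            exact (Set.disjoint_left.mp hd) (mem_bowenBall_self9 hε T p'.1 p'.2)
              (mem_bowenBall_self9 hε T p'.1 p'.2)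
          have hp'L'' : p' ∈ L'' :=
            Multiset.mem_filter.mpr ⟨(Multiset.mem_erase_of_ne hne).mpr hp', hd⟩
          obtain ⟨s, hsS', hsle, hsint⟩ := hS'touch p' hp'L''
          exact ⟨s, Multiset.mem_cons_of_mem hsS', hsle, hsint⟩
        · exact ⟨p, Multiset.mem_cons_self _ _, hmin p' hp',
            Set.not_disjoint_iff_nonempty_inter.mp hd⟩

/-- Core multiset Vitali lemma: if every point of `K` is covered at least `q` times,
then `q * M^b_{N,3ε}(K)` is at most the total cost. -/
lemma core9 [Nonempty X] {T : X → X} {b : ℕ → ℝ} (hb : GaugeSeq b) {N : ℕ} {ε : ℝ}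
    (hε : 0 < ε) {K : Set X} :
    ∀ q : ℕ, ∀ L : Multiset (ℕ × X), (∀ p ∈ L, N ≤ p.1) →
      (∀ z ∈ K, q ≤ Multiset.countP (fun p => z ∈ bowenBall T p.1 p.2 ε) L) →
      (q : ℝ≥0∞) * bowenM T b N (3 * ε) K ≤ (L.map fun p => ENNReal.ofReal (b p.1)).sum := by
  intro q
  induction q with
  | zero => intro L _ _; simp
  | succ q IH =>
    intro L hLN hLcov
    obtain ⟨S, hSle, hS1, hStouch⟩ := greedy9 hε L
    have hcov3 : ∀ z ∈ K, ∃ s ∈ S, z ∈ bowenBall T s.1 s.2 (3 * ε) := by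
      intro z hz
      have h1 : 0 < Multiset.countP (fun p => z ∈ bowenBall T p.1 p.2 ε) L :=
        lt_of_lt_of_le (Nat.succ_pos q) (hLcov z hz)
      obtain ⟨p', hp'L, hp'z⟩ := Multiset.countP_pos.mp h1
      obtain ⟨s, hsS, hsle, hsint⟩ := hStouch p' hp'L
      exact ⟨s, hsS, bowenBall_subset_triple9 hsle hsint hp'z⟩
    have hM : bowenM T b N (3 * ε) K ≤ (S.map fun p => ENNReal.ofReal (b p.1)).sum :=
      bowenM_le_multiset9 hb S (fun p hp => hLN p (Multiset.mem_of_le hSle hp)) hcov3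
    have hsplit : L = (L - S) + S := (tsub_add_cancel_of_le hSle).symm
    have hrem : ∀ z ∈ K, q ≤ Multiset.countP (fun p => z ∈ bowenBall T p.1 p.2 ε) (L - S) := by
      intro z hz
      have hcnt := congrArg (Multiset.countP (fun p => z ∈ bowenBall T p.1 p.2 ε)) hsplit
      rw [Multiset.countP_add] at hcnt
      have h1 := hLcov z hz
      have h2 := hS1 z
      omega
    have hIH := IH (L - S)
      (fun p hp => hLN p (by rw [hsplit]; exact Multiset.mem_add.mpr (Or.inl hp))) hrem
    calc ((q + 1 : ℕ) : ℝ≥0∞) * bowenM T b N (3 * ε) K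
        = (q : ℝ≥0∞) * bowenM T b N (3 * ε) K + bowenM T b N (3 * ε) K := by
          push_cast; ring
      _ ≤ ((L - S).map fun p => ENNReal.ofReal (b p.1)).sum
          + (S.map fun p => ENNReal.ofReal (b p.1)).sum := add_le_add hIH hM
      _ = (L.map fun p => ENNReal.ofReal (b p.1)).sum := by
          conv_rhs => rw [hsplit]
          rw [Multiset.map_add, Multiset.sum_add]

end AuxStmt9

section AuxStmt9b

open scoped Classical

variable {X : Type*} [MetricSpace X]

lemma finite_weighted9 [Nonempty X] {T : X → X} {b : ℕ → ℝ} (hb : GaugeSeq b) {N : ℕ}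
    {ε : ℝ} (hε : 0 < ε) {K : Set X} (I : Finset ℕ) (x : ℕ → X) (n : ℕ → ℕ) (c : ℕ → ℝ)
    (hc : ∀ i, 0 < c i) (hn : ∀ i, N ≤ n i) {θ : ℝ} (hθ : 0 < θ)
    (hcov : ∀ z ∈ K, θ ≤ ∑ i ∈ I, Set.indicator (bowenBall T (n i) (x i) ε) (fun _ => c i) z) :
    ENNReal.ofReal θ * bowenM T b N (3 * ε) K ≤ ENNReal.ofReal (∑ i ∈ I, c i * b (n i)) := by
  set M := bowenM T b N (3 * ε) K with hM
  set C := ∑ i ∈ I, c i * b (n i) with hC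
  set D := ∑ i ∈ I, b (n i) with hD
  have hbpos := hb.1
  have hC0 : 0 ≤ C := Finset.sum_nonneg fun i _ => mul_nonneg (hc i).le (hbpos (n i)).le
  have hD0 : 0 ≤ D := Finset.sum_nonneg fun i _ => (hbpos (n i)).le
  have key : ∀ q : ℕ, 1 ≤ q →
      ENNReal.ofReal ((q : ℝ) * θ) * M ≤ ENNReal.ofReal ((q : ℝ) * C + D) := by
    intro q hq
    set p : ℕ → ℕ := fun i => ⌈c i * (q : ℝ)⌉₊ with hp
    set L : Multiset (ℕ × X) := I.val.bind fun i => Multiset.replicate (p i) (n i, x i) with hL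
    have hLN : ∀ r ∈ L, N ≤ r.1 := by
      intro r hr
      obtain ⟨i, _, hrep⟩ := Multiset.mem_bind.mp hr
      rw [Multiset.eq_of_mem_replicate hrep]
      exact hn i
    have hcnt : ∀ z : X, Multiset.countP (fun r => z ∈ bowenBall T r.1 r.2 ε) L
        = ∑ i ∈ I, if z ∈ bowenBall T (n i) (x i) ε then p i else 0 := by
      intro z
      rw [hL, countP_bind_replicate9]
      rfl
    have hLcov : ∀ z ∈ K, ⌈(q : ℝ) * θ⌉₊ ≤
        Multiset.countP (fun r => z ∈ bowenBall T r.1 r.2 ε) L := by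
      intro z hz
      rw [hcnt z]
      rw [Nat.ceil_le]
      push_cast
      calc (q : ℝ) * θ ≤ (q : ℝ) * ∑ i ∈ I, Set.indicator (bowenBall T (n i) (x i) ε)
            (fun _ => c i) z := by
            apply mul_le_mul_of_nonneg_left (hcov z hz) (by positivity)
        _ = ∑ i ∈ I, (q : ℝ) * Set.indicator (bowenBall T (n i) (x i) ε) (fun _ => c i) z := by
            rw [Finset.mul_sum]
        _ ≤ ∑ i ∈ I, ((if z ∈ bowenBall T (n i) (x i) ε then (p i : ℝ) else 0)) := by
            apply Finset.sum_le_sum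
            intro i _
            by_cases hmem : z ∈ bowenBall T (n i) (x i) ε
            · rw [Set.indicator_of_mem hmem, if_pos hmem, mul_comm]
              exact Nat.le_ceil _
            · rw [Set.indicator_of_notMem hmem, if_neg hmem, mul_zero]
    have hcore := core9 hb hε (⌈(q : ℝ) * θ⌉₊) L hLN hLcov
    have hcost : (L.map fun r => ENNReal.ofReal (b r.1)).sum
        ≤ ENNReal.ofReal ((q : ℝ) * C + D) := by
      rw [hL, sum_map_bind_replicate9]
      have hterm : ∀ i ∈ I.val, (p i : ℝ≥0∞) * ENNReal.ofReal (b (n i))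
          = ENNReal.ofReal ((p i : ℝ) * b (n i)) := by
        intro i _
        rw [ENNReal.ofReal_mul (by positivity), ENNReal.ofReal_natCast]
      calc (I.val.map fun i => (p i : ℝ≥0∞) * ENNReal.ofReal (b (n i))).sum
          = ∑ i ∈ I, ENNReal.ofReal ((p i : ℝ) * b (n i)) := by
            rw [Finset.sum_eq_multiset_sum]
            exact congrArg Multiset.sum (Multiset.map_congr rfl hterm)
        _ = ENNReal.ofReal (∑ i ∈ I, (p i : ℝ) * b (n i)) :=
            (ENNReal.ofReal_sum_of_nonneg fun i _ =>
              mul_nonneg (Nat.cast_nonneg _) (hbpos (n i)).le).symm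
        _ ≤ ENNReal.ofReal ((q : ℝ) * C + D) := by
            apply ENNReal.ofReal_le_ofReal
            rw [hC, hD, Finset.mul_sum, ← Finset.sum_add_distrib]
            apply Finset.sum_le_sum
            intro i _
            have hple : (p i : ℝ) ≤ c i * q + 1 :=
              (Nat.ceil_lt_add_one (mul_nonneg (hc i).le (Nat.cast_nonneg q))).le
            calc (p i : ℝ) * b (n i) ≤ (c i * q + 1) * b (n i) :=
                  mul_le_mul_of_nonneg_right hple (hbpos (n i)).le
              _ = (q : ℝ) * (c i * b (n i)) + b (n i) := by ring
    calc ENNReal.ofReal ((q : ℝ) * θ) * M ≤ (⌈(q : ℝ) * θ⌉₊ : ℝ≥0∞) * M := by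
          refine mul_le_mul_of_nonneg_right ?_ zero_le
          rw [← ENNReal.ofReal_natCast]
          exact ENNReal.ofReal_le_ofReal (Nat.le_ceil _)
      _ ≤ (L.map fun r => ENNReal.ofReal (b r.1)).sum := hcore
      _ ≤ ENNReal.ofReal ((q : ℝ) * C + D) := hcost
  by_cases hMtop : M = ⊤
  · exfalso
    have h1 := key 1 le_rfl
    rw [hMtop, ENNReal.mul_top (by simp [ENNReal.ofReal_eq_zero]; nlinarith)] at h1
    exact (not_le.mpr ENNReal.ofReal_lt_top) (le_of_eq (top_le_iff.mp h1).symm)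
  · set μ := M.toReal with hμ
    have hμ0 : 0 ≤ μ := ENNReal.toReal_nonneg
    have hMeq : M = ENNReal.ofReal μ := (ENNReal.ofReal_toReal hMtop).symm
    have realkey : ∀ q : ℕ, 1 ≤ q → (q : ℝ) * θ * μ ≤ (q : ℝ) * C + D := by
      intro q hq
      have h := key q hq
      rw [hMeq, ← ENNReal.ofReal_mul (by positivity)] at h
      exact (ENNReal.ofReal_le_ofReal_iff
        (add_nonneg (mul_nonneg (Nat.cast_nonneg q) hC0) hD0)).mp h
    have hfin : θ * μ ≤ C := by
      apply le_of_forall_pos_le_add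
      intro η hη
      obtain ⟨q, hq1, hqD⟩ : ∃ q : ℕ, 1 ≤ q ∧ D / η < q := by
        obtain ⟨q, hq⟩ := exists_nat_gt (max 1 (D / η))
        exact ⟨q, by have := le_max_left 1 (D / η); exact_mod_cast (this.trans hq.le),
          (le_max_right _ _).trans_lt hq⟩
      have hqpos : (0 : ℝ) < q := by positivity
      have h := realkey q hq1
      have hDq : D ≤ η * q := by
        rw [div_lt_iff₀ hη] at hqD
        linarith
      nlinarith
    rw [hMeq, ← ENNReal.ofReal_mul hθ.le]
    exact ENNReal.ofReal_le_ofReal hfin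

lemma hard9 {T : X → X} (hT : Continuous T) {K : Set X} (hK : IsCompact K)
    {b : ℕ → ℝ} (hb : GaugeSeq b) (N : ℕ) {ε : ℝ} (hε : 0 < ε) :
    bowenM T b N (3 * ε) K ≤ weightedW T b N ε K := by
  apply le_sInf
  rintro u ⟨x, n, c, hc, hn, hcov, rfl⟩
  haveI : Nonempty X := ⟨x 0⟩
  apply ENNReal.le_of_forall_lt_one_mul_le
  intro a ha
  rcases eq_or_ne a 0 with rfl | ha0
  · simp
  have hatop : a ≠ ⊤ := ne_top_of_lt (lt_of_lt_of_le ha le_top)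
  set θ := a.toReal with hθdef
  have hθpos : 0 < θ := ENNReal.toReal_pos ha0 hatop
  have haeq : a = ENNReal.ofReal θ := (ENNReal.ofReal_toReal hatop).symm
  -- find finite partial sums exceeding `a` at each point of `K`
  have hIz : ∀ z : X, z ∈ K → ∃ Iz : Finset ℕ,
      a < ∑ i ∈ Iz, Set.indicator (bowenBall T (n i) (x i) ε)
        (fun _ => ENNReal.ofReal (c i)) z := by
    intro z hz
    have h1 : a < ∑' i, Set.indicator (bowenBall T (n i) (x i) ε)
        (fun _ => ENNReal.ofReal (c i)) z := lt_of_lt_of_le ha (hcov z hz)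
    rw [ENNReal.tsum_eq_iSup_sum] at h1
    exact lt_iSup_iff.mp h1
  choose! Is hIs using hIz
  set U : X → Set X := fun z => {w | a < ∑ i ∈ Is z, Set.indicator
    (bowenBall T (n i) (x i) ε) (fun _ => ENNReal.ofReal (c i)) w} with hU
  have hUopen : ∀ z : X, IsOpen (U z) := by
    intro z
    have hlsc : LowerSemicontinuous (fun w => ∑ i ∈ Is z, Set.indicator
        (bowenBall T (n i) (x i) ε) (fun _ => ENNReal.ofReal (c i)) w) :=
      lowerSemicontinuous_sum fun i _ =>
        (isOpen_bowenBall9 hT (n i) (x i) ε).lowerSemicontinuous_indicator zero_le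
    exact lowerSemicontinuous_iff_isOpen_preimage.mp hlsc a
  have hKsub : K ⊆ ⋃ z ∈ K, U z := fun z hz =>
    Set.mem_biUnion hz (hIs z hz)
  obtain ⟨t, htsub, htfin, ht⟩ := hK.elim_finite_subcover_image (fun z hz => hUopen z) hKsub
  obtain ⟨tf, htf⟩ := Set.Finite.exists_finset_coe htfin
  set I : Finset ℕ := tf.biUnion Is with hI
  have hbig : ∀ z ∈ K, a < ∑ i ∈ I, Set.indicator (bowenBall T (n i) (x i) ε)
      (fun _ => ENNReal.ofReal (c i)) z := by
    intro z hz
    obtain ⟨z₀, hz₀t, hzU⟩ := Set.mem_iUnion₂.mp (ht hz)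
    refine lt_of_lt_of_le hzU (Finset.sum_le_sum_of_subset ?_)
    apply Finset.subset_biUnion_of_mem Is
    rw [← htf] at hz₀t
    exact_mod_cast hz₀t
  -- convert to real sums
  have hreal : ∀ z ∈ K, θ ≤ ∑ i ∈ I, Set.indicator (bowenBall T (n i) (x i) ε)
      (fun _ => c i) z := by
    intro z hz
    have h1 := hbig z hz
    have heq : ∑ i ∈ I, Set.indicator (bowenBall T (n i) (x i) ε)
        (fun _ => ENNReal.ofReal (c i)) z
        = ENNReal.ofReal (∑ i ∈ I, Set.indicator (bowenBall T (n i) (x i) ε)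
          (fun _ => c i) z) := by
      rw [ENNReal.ofReal_sum_of_nonneg fun i _ => Set.indicator_nonneg (fun _ _ => (hc i).le) _]
      apply Finset.sum_congr rfl
      intro i _
      by_cases hmem : z ∈ bowenBall T (n i) (x i) ε
      · rw [Set.indicator_of_mem hmem, Set.indicator_of_mem hmem]
      · rw [Set.indicator_of_notMem hmem, Set.indicator_of_notMem hmem, ENNReal.ofReal_zero]
    rw [heq, haeq] at h1
    by_contra hcon
    push_neg at hcon
    exact absurd (ENNReal.ofReal_le_ofReal hcon.le) (not_le.mpr h1)
  have hmain := finite_weighted9 hb hε I x n c hc hn hθpos hreal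
  rw [haeq]
  refine hmain.trans ?_
  calc ENNReal.ofReal (∑ i ∈ I, c i * b (n i))
      = ∑ i ∈ I, ENNReal.ofReal (c i) * ENNReal.ofReal (b (n i)) := by
        rw [ENNReal.ofReal_sum_of_nonneg fun i _ =>
          mul_nonneg (hc i).le (hb.1 (n i)).le]
        exact Finset.sum_congr rfl fun i _ => ENNReal.ofReal_mul (hc i).le
    _ ≤ ∑' i, ENNReal.ofReal (c i) * ENNReal.ofReal (b (n i)) := ENNReal.sum_le_tsum I

lemma easy9 {T : X → X} {K : Set X} (b : ℕ → ℝ) (N : ℕ) (ε : ℝ) :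
    weightedW T b N ε K ≤ bowenM T b N ε K := by
  apply le_sInf
  rintro u ⟨x, n, hn, hcov, rfl⟩
  apply sInf_le
  refine ⟨x, n, fun _ => 1, fun _ => one_pos, hn, ?_, ?_⟩
  · intro z hz
    obtain ⟨i, hi⟩ := Set.mem_iUnion.mp (hcov hz)
    calc (1 : ℝ≥0∞) = Set.indicator (bowenBall T (n i) (x i) ε)
          (fun _ => ENNReal.ofReal 1) z := by
          rw [Set.indicator_of_mem hi, ENNReal.ofReal_one]
      _ ≤ ∑' j, Set.indicator (bowenBall T (n j) (x j) ε)
          (fun _ => ENNReal.ofReal 1) z := ENNReal.le_tsum i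
  · simp [ENNReal.ofReal_one, one_mul]

end AuxStmt9b

/-- For a compact set `K`, `M^b_{N,3ε}(K) ≤ W^b_{N,ε}(K) ≤ M^b_{N,ε}(K)`;
consequently `M^b(K) = W^b(K)`. -/
theorem stmt9 {X : Type*} [MetricSpace X] [CompactSpace X]
    (T : X → X) (hT : Continuous T)
    (K : Set X) (hK : IsCompact K)
    (b : ℕ → ℝ) (hb : GaugeSeq b) (N : ℕ) (ε : ℝ) (hε : 0 < ε) :
    bowenM T b N (3 * ε) K ≤ weightedW T b N ε K ∧
    weightedW T b N ε K ≤ bowenM T b N ε K ∧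
    bowenMFull T b K = weightedWFull T b K := by
  refine ⟨hard9 hT hK hb N hε, easy9 b N ε, le_antisymm ?_ ?_⟩
  · rw [bowenMFull, weightedWFull]
    refine iSup_le fun ε' => ?_
    rw [bowenMe]
    refine iSup_le fun N' => ?_
    have h3 : (0 : ℝ) < ε'.1 / 3 := by have := ε'.2; positivity
    have heq : bowenM T b N' ε'.1 K = bowenM T b N' (3 * (ε'.1 / 3)) K := by
      rw [show (3 : ℝ) * (ε'.1 / 3) = ε'.1 by ring]
    rw [heq]
    refine (hard9 hT hK hb N' h3).trans ?_
    exact le_iSup_of_le ⟨ε'.1 / 3, h3⟩ (le_iSup_of_le N' le_rfl)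
  · rw [bowenMFull, weightedWFull]
    refine iSup_mono fun ε' => ?_
    rw [bowenMe]
    exact iSup_mono fun N' => easy9 b N' ε'.1
end

section
/- There exists a Borel subset Z ⊂ [0,1] with dim_H(Z) = 1 that has no measure of full lower Hausdorff dimension, but does have a measure of full upper Hausdorff dimension: there is a Borel probability measure μ with μ(Z) = 1 and dim̄_H(μ) = dim_H(Z) = 1. -/
open Filter Set MeasureTheory Topology
open scoped ENNReal NNReal

noncomputable section

namespace SD

/-- `i`-th binary digit of `x`, as a real number. -/
def dg (i : ℕ) (x : ℝ) : ℝ := (⌊2 ^ (i+1) * x⌋ : ℝ) - 2 * (⌊2 ^ i * x⌋ : ℝ)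

lemma dg_eq (i : ℕ) (x : ℝ) : dg i x = 0 ∨ dg i x = 1 := by
  have h1 : (2:ℝ) ^ (i+1) * x = 2 * (2 ^ i * x) := by ring
  set y : ℝ := 2 ^ i * x with hy
  have hfl : (⌊2 * y⌋ : ℤ) = 2 * ⌊y⌋ ∨ (⌊2 * y⌋ : ℤ) = 2 * ⌊y⌋ + 1 := by
    have hlow : 2 * ⌊y⌋ ≤ ⌊2 * y⌋ := by
      rw [Int.le_floor]; push_cast
      nlinarith [Int.floor_le y]
    have hupp : ⌊2 * y⌋ < 2 * ⌊y⌋ + 2 := by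
      rw [Int.floor_lt]; push_cast
      nlinarith [Int.lt_floor_add_one y]
    omega
  rcases hfl with h | h
  · left; rw [dg, h1, h]; push_cast; ring
  · right; rw [dg, h1, h]; push_cast; ring

lemma dg_nonneg (i : ℕ) (x : ℝ) : 0 ≤ dg i x := by
  rcases dg_eq i x with h | h <;> rw [h] <;> norm_num

lemma dg_le_one (i : ℕ) (x : ℝ) : dg i x ≤ 1 := by
  rcases dg_eq i x with h | h <;> rw [h] <;> norm_num

lemma dg_measurable (i : ℕ) : Measurable (dg i) := by
  have h : ∀ c : ℝ, Measurable fun x : ℝ => ((⌊c * x⌋ : ℤ) : ℝ) := fun c =>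
    Measurable.comp (measurable_of_countable _) (measurable_const_mul c).floor
  exact (h _).sub ((h _).const_mul 2)

lemma sum_dg (x : ℝ) (k : ℕ) :
    ∑ i ∈ Finset.range k, dg i x * (2:ℝ)⁻¹ ^ (i+1) = (⌊2 ^ k * x⌋ : ℝ) / 2 ^ k - (⌊x⌋ : ℝ) := by
  induction k with
  | zero => simp
  | succ k ih =>
    rw [Finset.sum_range_succ, ih, dg, inv_pow]
    have h2 : (0:ℝ) < 2 ^ k := by positivity
    have h3 : (0:ℝ) < 2 ^ (k+1) := by positivity
    field_simp
    ring

lemma abs_sub_sum_dg_le {x : ℝ} (hx : x ∈ Ico (0:ℝ) 1) (k : ℕ) :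
    |x - ∑ i ∈ Finset.range k, dg i x * (2:ℝ)⁻¹ ^ (i+1)| ≤ (2:ℝ)⁻¹ ^ k := by
  have hx0 : ⌊x⌋ = 0 := Int.floor_eq_zero_iff.2 (by exact ⟨hx.1, hx.2⟩)
  rw [sum_dg, hx0]
  have h2 : (0:ℝ) < 2 ^ k := by positivity
  have hle : (⌊2 ^ k * x⌋ : ℝ) ≤ 2 ^ k * x := Int.floor_le _
  have hgt : 2 ^ k * x < (⌊2 ^ k * x⌋ : ℝ) + 1 := Int.lt_floor_add_one _
  rw [abs_le, inv_pow, ← one_div]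
  push_cast
  have e1 : (⌊2 ^ k * x⌋ : ℝ) / 2 ^ k ≤ x := by rw [div_le_iff₀ h2]; linarith
  have e2 : x ≤ ((⌊2 ^ k * x⌋ : ℝ) + 1) / 2 ^ k := by rw [le_div_iff₀ h2]; linarith
  have e3 : ((⌊2 ^ k * x⌋ : ℝ) + 1) / 2 ^ k = (⌊2 ^ k * x⌋ : ℝ) / 2 ^ k + 1 / 2 ^ k := by ring
  have h4 : (0:ℝ) ≤ 1 / 2 ^ k := by positivity
  constructor
  · linarith
  · linarith

/-- The Cantor-type coding map with ratio `r`. -/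
def fr (r : ℝ) (x : ℝ) : ℝ := ∑' i, dg i x * ((1 - r) * r ^ i)

section Param

variable {r : ℝ} (hr0 : 0 < r) (hr2 : r < 1/2)

include hr0 hr2

lemma summable_geom : Summable (fun i : ℕ => (1 - r) * r ^ i) :=
  (summable_geometric_of_lt_one hr0.le (by linarith)).mul_left _

lemma summable_fr (x : ℝ) : Summable (fun i : ℕ => dg i x * ((1 - r) * r ^ i)) := by
  have hc : (0:ℝ) ≤ 1 - r := by linarith
  refine Summable.of_nonneg_of_le (fun i => ?_) (fun i => ?_) (summable_geom hr0 hr2)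
  · have h0 := dg_nonneg i x
    have h2 : (0:ℝ) ≤ (1 - r) * r ^ i := by positivity
    nlinarith
  · have h1 := dg_le_one i x
    have h2 : (0:ℝ) ≤ (1 - r) * r ^ i := by positivity
    nlinarith

lemma summable_fr_tail (x : ℝ) (k : ℕ) :
    Summable (fun i : ℕ => dg (i + k) x * ((1 - r) * r ^ (i + k))) :=
  (summable_nat_add_iff k).2 (summable_fr hr0 hr2 x)

lemma tail_nonneg (x : ℝ) (k : ℕ) :
    0 ≤ ∑' i : ℕ, dg (i + k) x * ((1 - r) * r ^ (i + k)) := by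
  have hc : (0:ℝ) ≤ 1 - r := by linarith
  refine tsum_nonneg fun i => ?_
  have h0 := dg_nonneg (i + k) x
  have h2 : (0:ℝ) ≤ (1 - r) * r ^ (i + k) := by positivity
  nlinarith

lemma tsum_geom_tail (k : ℕ) : ∑' i : ℕ, (1 - r) * r ^ (i + k) = r ^ k := by
  have h1 : ∀ i : ℕ, (1 - r) * r ^ (i + k) = ((1 - r) * r ^ k) * r ^ i := by
    intro i; rw [pow_add]; ring
  simp_rw [h1]
  rw [tsum_mul_left, tsum_geometric_of_lt_one hr0.le (by linarith)]
  have : (1:ℝ) - r ≠ 0 := by linarith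
  field_simp

lemma tail_le (x : ℝ) (k : ℕ) :
    ∑' i : ℕ, dg (i + k) x * ((1 - r) * r ^ (i + k)) ≤ r ^ k := by
  rw [← tsum_geom_tail hr0 hr2 k]
  refine Summable.tsum_le_tsum (fun i => ?_) (summable_fr_tail hr0 hr2 x k)
    ((summable_nat_add_iff k).2 (summable_geom hr0 hr2))
  have hc : (0:ℝ) ≤ 1 - r := by linarith
  have h1 := dg_le_one (i + k) x
  have h2 : (0:ℝ) ≤ (1 - r) * r ^ (i + k) := by positivity
  nlinarith

lemma fr_decomp (x : ℝ) (k : ℕ) :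
    fr r x = (∑ i ∈ Finset.range k, dg i x * ((1 - r) * r ^ i)) +
      ∑' i : ℕ, dg (i + k) x * ((1 - r) * r ^ (i + k)) :=
  (Summable.sum_add_tsum_nat_add k (summable_fr hr0 hr2 x)).symm

lemma fr_mem_Icc (x : ℝ) : fr r x ∈ Icc (0:ℝ) 1 := by
  have h := fr_decomp hr0 hr2 x 0
  simp only [Finset.range_zero, Finset.sum_empty, zero_add] at h
  constructor
  · rw [h]; simpa using tail_nonneg hr0 hr2 x 0
  · rw [h]; simpa using tail_le hr0 hr2 x 0


lemma fr_measurable : Measurable (fr r) := by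
  have hpart : ∀ k : ℕ, Measurable fun x => ∑ i ∈ Finset.range k, dg i x * ((1 - r) * r ^ i) := by
    intro k
    exact Finset.measurable_sum _ fun i _ => (dg_measurable i).mul_const _
  refine measurable_of_tendsto_metrizable hpart (tendsto_pi_nhds.2 fun x => ?_)
  exact (summable_fr hr0 hr2 x).hasSum.tendsto_sum_nat

/-- If two points have `fr`-values closer than the level-`k` gap, then their first
`k+1` binary digits agree. -/
lemma dg_agree {x1 x2 : ℝ} :
    ∀ k : ℕ, |fr r x1 - fr r x2| < (1 - 2*r) * r ^ k → ∀ j ≤ k, dg j x1 = dg j x2 := by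
  have gap : ∀ {y1 y2 : ℝ} (k : ℕ), (∀ j < k, dg j y1 = dg j y2) →
      dg k y1 = 1 → dg k y2 = 0 → (1 - 2*r) * r ^ k ≤ fr r y1 - fr r y2 := by
    intro y1 y2 k hagree h1 h2
    have d1 := fr_decomp hr0 hr2 y1 (k+1)
    have d2 := fr_decomp hr0 hr2 y2 (k+1)
    rw [Finset.sum_range_succ] at d1 d2
    have hpre : ∑ i ∈ Finset.range k, dg i y1 * ((1 - r) * r ^ i)
        = ∑ i ∈ Finset.range k, dg i y2 * ((1 - r) * r ^ i) := by
      refine Finset.sum_congr rfl fun i hi => ?_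
      rw [hagree i (Finset.mem_range.1 hi)]
    have ht1 := tail_nonneg hr0 hr2 y1 (k+1)
    have ht2 := tail_le hr0 hr2 y2 (k+1)
    rw [d1, d2, hpre, h1, h2]
    have : r ^ (k+1) = r * r ^ k := by ring
    nlinarith [pow_nonneg hr0.le k]
  intro k
  induction k with
  | zero =>
    intro h j hj
    interval_cases j
    by_contra hne
    rcases dg_eq 0 x1 with e1 | e1 <;> rcases dg_eq 0 x2 with e2 | e2
    · exact hne (e1.trans e2.symm)
    · have := gap 0 (by omega) e2 e1
      rw [abs_lt] at h
      simp only [pow_zero, mul_one] at *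
      linarith
    · have := gap 0 (by omega) e1 e2
      rw [abs_lt] at h
      simp only [pow_zero, mul_one] at *
      linarith
    · exact hne (e1.trans e2.symm)
  | succ k ih =>
    intro h j hj
    have hmono : (1 - 2*r) * r ^ (k+1) ≤ (1 - 2*r) * r ^ k := by
      have : r ^ (k+1) ≤ r ^ k :=
        pow_le_pow_of_le_one hr0.le (by linarith) (Nat.le_succ k)
      nlinarith
    have hprev : ∀ j ≤ k, dg j x1 = dg j x2 := ih (lt_of_lt_of_le h hmono)
    have habs := abs_lt.1 h
    rcases Nat.lt_succ_iff_lt_or_eq.1 (Nat.lt_succ_of_le hj) with hlt | heq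
    · exact hprev j (by omega)
    · rw [heq]
      by_contra hne
      have hagree : ∀ i < k + 1, dg i x1 = dg i x2 := fun i hi => hprev i (by omega)
      rcases dg_eq (k+1) x1 with e1 | e1 <;> rcases dg_eq (k+1) x2 with e2 | e2
      · exact hne (e1.trans e2.symm)
      · have := gap (k+1) (fun i hi => (hagree i hi).symm) e2 e1
        linarith [habs.1, habs.2]
      · have := gap (k+1) hagree e1 e2
        linarith [habs.1, habs.2]
      · exact hne (e1.trans e2.symm)

lemma dist_le_of_dg_agree {x1 x2 : ℝ} (h1 : x1 ∈ Ico (0:ℝ) 1) (h2 : x2 ∈ Ico (0:ℝ) 1)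
    {k : ℕ} (h : ∀ j ≤ k, dg j x1 = dg j x2) : |x1 - x2| ≤ (2:ℝ)⁻¹ ^ k := by
  have hpre : ∑ i ∈ Finset.range (k+1), dg i x1 * (2:ℝ)⁻¹ ^ (i+1)
      = ∑ i ∈ Finset.range (k+1), dg i x2 * (2:ℝ)⁻¹ ^ (i+1) := by
    refine Finset.sum_congr rfl fun i hi => ?_
    rw [h i (Nat.lt_succ_iff.1 (Finset.mem_range.1 hi))]
  have e1 := abs_sub_sum_dg_le h1 (k+1)
  have e2 := abs_sub_sum_dg_le h2 (k+1)
  have key : (2:ℝ)⁻¹ ^ (k+1) + (2:ℝ)⁻¹ ^ (k+1) = (2:ℝ)⁻¹ ^ k := by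
    rw [pow_succ]; ring
  rw [abs_le] at e1 e2 ⊢
  constructor <;> [skip; skip] <;> nlinarith [hpre]

lemma fr_injOn : InjOn (fr r) (Ico 0 1) := by
  intro x1 h1 x2 h2 hf
  have hagree : ∀ k : ℕ, ∀ j ≤ k, dg j x1 = dg j x2 := by
    intro k
    refine dg_agree hr0 hr2 k ?_
    rw [hf, sub_self, abs_zero]
    have : (0:ℝ) < r ^ k := by positivity
    nlinarith
  have hb : ∀ k : ℕ, |x1 - x2| ≤ (2:ℝ)⁻¹ ^ k := fun k =>
    dist_le_of_dg_agree hr0 hr2 h1 h2 (hagree k)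
  have hlim : Tendsto (fun k : ℕ => (2:ℝ)⁻¹ ^ k) atTop (𝓝 0) := by
    apply tendsto_pow_atTop_nhds_zero_of_lt_one <;> norm_num
  have hz : |x1 - x2| = 0 := le_antisymm (ge_of_tendsto' hlim hb) (abs_nonneg _)
  exact sub_eq_zero.1 (abs_eq_zero.1 hz)

/-- Inverse of the coding map on `[0,1)`. -/
def gr (r : ℝ) : ℝ → ℝ := Function.invFunOn (fr r) (Ico 0 1)

lemma gr_fr {x : ℝ} (hx : x ∈ Ico (0:ℝ) 1) : gr r (fr r x) = x :=
  (fr_injOn hr0 hr2).leftInvOn_invFunOn hx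

variable {s : ℝ} (hs0 : 0 < s) (hrs : r ^ s = 1/2)

include hs0 hrs

lemma key_ineq {x1 x2 : ℝ} (h1 : x1 ∈ Ico (0:ℝ) 1) (h2 : x2 ∈ Ico (0:ℝ) 1) :
    |x1 - x2| ≤ (2 * ((1 - 2*r)⁻¹) ^ s) * |fr r x1 - fr r x2| ^ s := by
  have hg : (0:ℝ) < 1 - 2*r := by linarith
  set D := |fr r x1 - fr r x2| with hD
  have hD0 : 0 ≤ D := abs_nonneg _
  rcases eq_or_lt_of_le hD0 with hz | hpos
  · have : fr r x1 = fr r x2 := by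
      have := abs_eq_zero.1 hz.symm
      linarith [sub_eq_zero.1 this, le_of_eq (sub_eq_zero.1 this)]
    have hx12 : x1 = x2 := fr_injOn hr0 hr2 h1 h2 this
    rw [hx12, sub_self, abs_zero]
    positivity
  · have hsplit : ((1 - 2*r)⁻¹ * D) ^ s = ((1 - 2*r)⁻¹) ^ s * D ^ s :=
      Real.mul_rpow (by positivity) hD0
    rcases le_or_gt (1 - 2*r) D with hbig | hsmall
    · -- coarse case
      have hx : |x1 - x2| ≤ 1 := by
        rw [abs_le]
        constructor <;> [linarith [h1.1, h2.2]; linarith [h1.2, h2.1]]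
      have hbase : (1:ℝ) ≤ (1 - 2*r)⁻¹ * D := by
        rw [inv_mul_eq_div, le_div_iff₀ hg]; linarith
      have h1r : (1:ℝ) ≤ ((1 - 2*r)⁻¹ * D) ^ s := by
        calc (1:ℝ) = (1:ℝ) ^ s := (Real.one_rpow s).symm
          _ ≤ ((1 - 2*r)⁻¹ * D) ^ s := Real.rpow_le_rpow (by norm_num) hbase hs0.le
      nlinarith
    · -- fine case
      have hex : ∃ m : ℕ, (1 - 2*r) * r ^ (m+1) ≤ D := by
        obtain ⟨n, hn⟩ := exists_pow_lt_of_lt_one (show (0:ℝ) < D / (1 - 2*r) by positivity)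
          (show r < 1 by linarith)
        refine ⟨n, ?_⟩
        have hr1' : r ^ (n+1) ≤ r ^ n := pow_le_pow_of_le_one hr0.le (by linarith) (Nat.le_succ n)
        rw [lt_div_iff₀ hg] at hn
        nlinarith
      set k := Nat.find hex with hkdef
      have hk : (1 - 2*r) * r ^ (k+1) ≤ D := Nat.find_spec hex
      have hk2 : D < (1 - 2*r) * r ^ k := by
        rcases Nat.eq_zero_or_pos k with h0 | hposk
        · rw [h0]; simpa using hsmall
        · obtain ⟨m, hm⟩ := Nat.exists_eq_succ_of_ne_zero (Nat.pos_iff_ne_zero.1 hposk)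
          have hmin := Nat.find_min hex (hm ▸ m.lt_succ_self)
          rw [hm]
          exact lt_of_not_ge hmin
      have hagree := dg_agree hr0 hr2 k hk2
      have hdist := dist_le_of_dg_agree hr0 hr2 h1 h2 hagree
      have hpow : ((2:ℝ)⁻¹) ^ k = (r ^ s) ^ k := by rw [hrs]; norm_num
      have e1 : ((r:ℝ) ^ s) ^ k = r ^ (s * (k:ℝ)) := by
        rw [← Real.rpow_natCast (r ^ s) k, ← Real.rpow_mul hr0.le]
      have e2 : ((r:ℝ) ^ (k+1)) ^ s = r ^ (s * (k:ℝ)) * r ^ s := by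
        rw [← Real.rpow_natCast r (k+1), ← Real.rpow_mul hr0.le, ← Real.rpow_add hr0]
        norm_num
        ring_nf
      have hmono : ((r:ℝ) ^ (k+1)) ^ s ≤ ((1 - 2*r)⁻¹ * D) ^ s := by
        refine Real.rpow_le_rpow (by positivity) ?_ hs0.le
        rw [inv_mul_eq_div, le_div_iff₀ hg]
        nlinarith
      calc |x1 - x2| ≤ (2:ℝ)⁻¹ ^ k := hdist
        _ = r ^ (s * (k:ℝ)) := by rw [hpow, e1]
        _ = 2 * (r ^ (s * (k:ℝ)) * r ^ s) := by rw [hrs]; ring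
        _ = 2 * (((r:ℝ) ^ (k+1)) ^ s) := by rw [e2]
        _ ≤ 2 * (((1 - 2*r)⁻¹ * D) ^ s) := by linarith
        _ = 2 * ((1 - 2*r)⁻¹) ^ s * D ^ s := by rw [hsplit]; ring

lemma holder_gr :
    HolderOnWith (2 * ((1 - 2*r)⁻¹) ^ s).toNNReal s.toNNReal (gr r) (fr r '' Ico 0 1) := by
  rintro y1 ⟨x1, hx1, rfl⟩ y2 ⟨x2, hx2, rfl⟩
  rw [gr_fr hr0 hr2 hx1, gr_fr hr0 hr2 hx2, edist_dist, edist_dist, Real.dist_eq, Real.dist_eq,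
    Real.coe_toNNReal _ hs0.le]
  have hkey := key_ineq hr0 hr2 hs0 hrs hx1 hx2
  have hC : (0:ℝ) ≤ 2 * ((1 - 2*r)⁻¹) ^ s := by
    have hg : (0:ℝ) < 1 - 2*r := by linarith
    have := Real.rpow_nonneg (inv_nonneg.2 hg.le) s
    linarith
  calc ENNReal.ofReal |x1 - x2|
      ≤ ENNReal.ofReal ((2 * ((1 - 2*r)⁻¹) ^ s) * |fr r x1 - fr r x2| ^ s) :=
        ENNReal.ofReal_le_ofReal hkey
    _ = ENNReal.ofReal (2 * ((1 - 2*r)⁻¹) ^ s) * ENNReal.ofReal (|fr r x1 - fr r x2| ^ s) :=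
        ENNReal.ofReal_mul hC
    _ = ↑(2 * ((1 - 2*r)⁻¹) ^ s).toNNReal * ENNReal.ofReal |fr r x1 - fr r x2| ^ s := by
        rw [ENNReal.ofReal_rpow_of_nonneg (abs_nonneg _) hs0.le]; rfl

/-- The mass distribution principle for the measure `μr`. -/
lemma frostman (E : Set ℝ) (hE : MeasurableSet E)
    (h : Measure.map (fr r) (volume.restrict (Ico 0 1)) E ≠ 0) :
    ENNReal.ofReal s ≤ dimH E := by
  have hmap : Measure.map (fr r) (volume.restrict (Ico 0 1)) E
      = volume (fr r ⁻¹' E ∩ Ico 0 1) := by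
    rw [Measure.map_apply (fr_measurable hr0 hr2) hE, Measure.restrict_apply
      ((fr_measurable hr0 hr2) hE)]
  set A := fr r ⁻¹' E ∩ Ico 0 1 with hA
  have h1dim : (1:ℝ≥0∞) ≤ dimH A := by
    have hvol : μH[(1:ℝ)] A ≠ 0 := by
      rw [hausdorffMeasure_real]
      rw [hmap] at h
      exact h
    have := le_dimH_of_hausdorffMeasure_ne_zero (d := 1) (by exact_mod_cast hvol)
    simpa using this
  set F := E ∩ fr r '' Ico 0 1 with hF
  have hsub : A ⊆ gr r '' F := by
    rintro x ⟨hxE, hxI⟩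
    exact ⟨fr r x, ⟨hxE, mem_image_of_mem _ hxI⟩, gr_fr hr0 hr2 hxI⟩
  have himg : dimH (gr r '' F) ≤ dimH F / (s.toNNReal : ℝ≥0∞) :=
    HolderOnWith.dimH_image_le ((holder_gr hr0 hr2 hs0 hrs).mono inter_subset_right)
      (Real.toNNReal_pos.2 hs0)
  have hchain : (1:ℝ≥0∞) ≤ dimH F / (s.toNNReal : ℝ≥0∞) :=
    le_trans h1dim (le_trans (dimH_mono hsub) himg)
  have hfin : (s.toNNReal : ℝ≥0∞) ≤ dimH F := by
    have := (ENNReal.le_div_iff_mul_le (Or.inl ?_) (Or.inl ?_)).1 hchain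
    · rwa [one_mul] at this
    · exact_mod_cast (Real.toNNReal_pos.2 hs0).ne'
    · exact ENNReal.coe_ne_top
  calc ENNReal.ofReal s = (s.toNNReal : ℝ≥0∞) := rfl
    _ ≤ dimH F := hfin
    _ ≤ dimH E := dimH_mono inter_subset_left

end Param

/-- The Cantor-type set with ratio `r`. -/
def Kr (r : ℝ) : Set ℝ := closure (fr r '' Ico 0 1)

/-- The natural measure on `Kr r`. -/
def mur (r : ℝ) : Measure ℝ := Measure.map (fr r) (volume.restrict (Ico 0 1))

section Param2

variable {r : ℝ} (hr0 : 0 < r) (hr2 : r < 1/2)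

lemma isClosed_Kr : IsClosed (Kr r) := isClosed_closure

include hr0 hr2

lemma Kr_subset_Icc : Kr r ⊆ Icc (0:ℝ) 1 :=
  closure_minimal (image_subset_iff.2 fun x _ => fr_mem_Icc hr0 hr2 x) isClosed_Icc

instance : IsProbabilityMeasure (volume.restrict (Ico (0:ℝ) 1)) :=
  ⟨by rw [Measure.restrict_apply_univ, Real.volume_Ico]; norm_num⟩

lemma mur_prob : IsProbabilityMeasure (mur r) :=
  Measure.isProbabilityMeasure_map (fr_measurable hr0 hr2).aemeasurable

lemma mur_Kr : mur r (Kr r) = 1 := by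
  rw [mur, Measure.map_apply (fr_measurable hr0 hr2) (isClosed_Kr).measurableSet,
    Measure.restrict_apply ((fr_measurable hr0 hr2) (isClosed_Kr).measurableSet)]
  have hsub : Ico (0:ℝ) 1 ⊆ fr r ⁻¹' Kr r := fun x hx =>
    subset_closure (mem_image_of_mem _ hx)
  rw [inter_eq_self_of_subset_right hsub, Real.volume_Ico]
  norm_num

variable {s : ℝ} (hs0 : 0 < s) (hrs : r ^ s = 1/2)

include hs0 hrs

lemma s_lt_one : s < 1 := by
  have h : r ^ (1:ℝ) < r ^ s := by rw [hrs, Real.rpow_one]; linarith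
  exact (Real.rpow_lt_rpow_left_iff_of_base_lt_one hr0 (by linarith)).1 h

lemma hausdorff_Kr_zero {d : ℝ} (hd : s < d) : μH[d] (Kr r) = 0 := by
  have hd0 : 0 < d := lt_trans hs0 hd
  -- the covering at level k
  set av : ∀ k : ℕ, (Fin k → Bool) → ℝ :=
    fun k v => ∑ i : Fin k, cond (v i) ((1 - r) * r ^ (i:ℕ)) 0 with hav
  have hcov : ∀ k : ℕ, Kr r ⊆ ⋃ v : Fin k → Bool, Icc (av k v) (av k v + r ^ k) := by
    intro k
    refine closure_minimal ?_ (isClosed_iUnion_of_finite fun v => isClosed_Icc)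
    rintro y ⟨x, _, rfl⟩
    refine mem_iUnion.2 ⟨fun i => decide (dg (i:ℕ) x = 1), ?_⟩
    have hsum : av k (fun i => decide (dg (i:ℕ) x = 1))
        = ∑ i ∈ Finset.range k, dg i x * ((1 - r) * r ^ i) := by
      rw [hav]
      rw [Finset.sum_range fun i => dg i x * ((1 - r) * r ^ i)]
      refine Finset.sum_congr rfl fun i _ => ?_
      rcases dg_eq (i:ℕ) x with h | h <;> simp [h]
    have hdec := fr_decomp hr0 hr2 x k
    have ht0 := tail_nonneg hr0 hr2 x k
    have ht1 := tail_le hr0 hr2 x k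
    constructor
    · rw [hsum]; rw [hdec]; linarith
    · rw [hsum]; rw [hdec]; linarith
  have hdiam : ∀ k : ℕ, ∀ v : Fin k → Bool,
      Metric.ediam (Icc (av k v) (av k v + r ^ k)) = ENNReal.ofReal (r ^ k) := by
    intro k v
    rw [Real.ediam_Icc]
    congr 1
    ring
  have hle := Measure.hausdorffMeasure_le_liminf_sum d (Kr r)
    (fun k : ℕ => ENNReal.ofReal (r ^ k))
    (by
      have : Tendsto (fun k : ℕ => r ^ k) atTop (𝓝 0) :=
        tendsto_pow_atTop_nhds_zero_of_lt_one hr0.le (by linarith)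
      simpa using ENNReal.tendsto_ofReal this)
    (fun k v => Icc (av k v) (av k v + r ^ k))
    (Eventually.of_forall fun k => fun v => le_of_eq (hdiam k v))
    (Eventually.of_forall hcov)
  have hterm : ∀ k : ℕ, (∑ v : Fin k → Bool,
      Metric.ediam (Icc (av k v) (av k v + r ^ k)) ^ d) = ENNReal.ofReal ((2 * r ^ d) ^ k) := by
    intro k
    have hcard : Fintype.card (Fin k → Bool) = 2 ^ k := by
      simp [Fintype.card_fun]
    rw [Finset.sum_congr rfl fun v _ => by rw [hdiam k v]]
    rw [Finset.sum_const, Finset.card_univ, hcard]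
    have h1 : (ENNReal.ofReal (r ^ k)) ^ d = ENNReal.ofReal ((r ^ d) ^ k) := by
      rw [ENNReal.ofReal_rpow_of_nonneg (by positivity) hd0.le]
      congr 1
      rw [← Real.rpow_natCast r k, ← Real.rpow_mul hr0.le, ← Real.rpow_natCast (r ^ d) k,
        ← Real.rpow_mul hr0.le]
      ring_nf
    rw [h1, nsmul_eq_mul]
    rw [show ((2 ^ k : ℕ) : ℝ≥0∞) = ENNReal.ofReal ((2:ℝ) ^ k) by
      rw [ENNReal.ofReal_pow (by norm_num)]
      push_cast
      norm_num]
    rw [← ENNReal.ofReal_mul (by positivity)]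
    congr 1
    rw [mul_pow]
  rw [← le_zero_iff]
  refine le_trans hle ?_
  have : Tendsto (fun k : ℕ => ENNReal.ofReal ((2 * r ^ d) ^ k)) atTop (𝓝 0) := by
    have hq1 : 2 * r ^ d < 1 := by
      have : r ^ d < r ^ s := Real.rpow_lt_rpow_of_exponent_gt hr0 (by linarith) hd
      rw [hrs] at this
      linarith
    have hq0 : 0 ≤ 2 * r ^ d := by
      have := Real.rpow_nonneg hr0.le d
      linarith
    have := tendsto_pow_atTop_nhds_zero_of_lt_one hq0 hq1
    simpa using ENNReal.tendsto_ofReal this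
  rw [show (fun k : ℕ => ∑ v : Fin k → Bool,
      Metric.ediam (Icc (av k v) (av k v + r ^ k)) ^ d) = fun k => ENNReal.ofReal ((2 * r ^ d) ^ k)
    from funext hterm]
  rw [this.liminf_eq]

lemma dimH_Kr_le : dimH (Kr r) ≤ ENNReal.ofReal s := by
  refine dimH_le fun d' hd' => ?_
  by_contra hlt
  push_neg at hlt
  have hsd : s < (d' : ℝ) := by
    have h0 : ENNReal.ofReal s < (d' : ℝ≥0∞) := hlt
    rw [← ENNReal.ofReal_coe_nnreal] at h0
    by_contra hc
    push_neg at hc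
    exact absurd (ENNReal.ofReal_le_ofReal hc) (not_le.2 h0)
  rw [hausdorff_Kr_zero hr0 hr2 hs0 hrs hsd] at hd'
  simp at hd'

end Param2




/-! ### Instantiation -/

def sn (n : ℕ) : ℝ := (n+1)/(n+2)

def rn (n : ℕ) : ℝ := (1/2 : ℝ) ^ (1 / sn n)

lemma sn_pos (n : ℕ) : 0 < sn n := by
  rw [sn]; positivity

lemma sn_lt_one (n : ℕ) : sn n < 1 := by
  rw [sn, div_lt_one (by positivity)]
  linarith

lemma one_lt_inv_sn (n : ℕ) : 1 < 1 / sn n := by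
  rw [lt_div_iff₀ (sn_pos n), one_mul]
  exact sn_lt_one n

lemma rn_pos (n : ℕ) : 0 < rn n := Real.rpow_pos_of_pos (by norm_num) _

lemma rn_lt_half (n : ℕ) : rn n < 1/2 := by
  have h := Real.rpow_lt_rpow_of_exponent_gt (x := (1/2:ℝ)) (by norm_num) (by norm_num)
    (one_lt_inv_sn n)
  rwa [Real.rpow_one] at h

lemma rn_rpow_sn (n : ℕ) : rn n ^ sn n = 1/2 := by
  rw [rn, ← Real.rpow_mul (by norm_num), one_div_mul_cancel (sn_pos n).ne', Real.rpow_one]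

/-- The exceptional set. -/
def Zset : Set ℝ := ⋃ n, Kr (rn n)

/-- The measure of full upper dimension. -/
def muZ : Measure ℝ := Measure.sum (fun n => ((2:ℝ≥0∞)⁻¹) ^ (n+1) • mur (rn n))

lemma Zset_subset_Icc : Zset ⊆ Icc (0:ℝ) 1 :=
  iUnion_subset fun n => Kr_subset_Icc (rn_pos n) (rn_lt_half n)

lemma Zset_measurable : MeasurableSet Zset :=
  MeasurableSet.iUnion fun n => (isClosed_Kr).measurableSet

lemma frostman_n (n : ℕ) (E : Set ℝ) (hE : MeasurableSet E) (h : mur (rn n) E ≠ 0) :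
    ENNReal.ofReal (sn n) ≤ dimH E :=
  frostman (rn_pos n) (rn_lt_half n) (sn_pos n) (rn_rpow_sn n) E hE h

lemma one_le_of_forall_sn {a : ℝ≥0∞} (h : ∀ n, ENNReal.ofReal (sn n) ≤ a) : 1 ≤ a := by
  refine le_of_forall_lt fun c hc => ?_
  have hct : c ≠ ⊤ := hc.ne_top
  have hc1 : c.toReal < 1 := by
    have := (ENNReal.toReal_lt_toReal hct (by norm_num : (1:ℝ≥0∞) ≠ ⊤)).2 hc
    simpa using this
  obtain ⟨m, hm⟩ := exists_nat_gt (1/(1 - c.toReal))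
  have hpos : 0 < 1 - c.toReal := by linarith
  rw [div_lt_iff₀ hpos] at hm
  have hsn : c.toReal < sn m := by
    rw [sn, lt_div_iff₀ (by positivity : (0:ℝ) < (m:ℝ) + 2)]
    nlinarith
  calc c = ENNReal.ofReal c.toReal := (ENNReal.ofReal_toReal hct).symm
    _ < ENNReal.ofReal (sn m) := by
        rw [ENNReal.ofReal_lt_ofReal_iff (sn_pos m)]
        exact hsn
    _ ≤ a := h m

lemma dimH_Zset : dimH Zset = 1 := by
  refine le_antisymm ?_ ?_
  · calc dimH Zset ≤ dimH (univ : Set ℝ) := dimH_mono (subset_univ _)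
      _ = 1 := Real.dimH_univ
  · refine one_le_of_forall_sn fun n => ?_
    calc ENNReal.ofReal (sn n) ≤ dimH (Kr (rn n)) := by
          refine frostman_n n _ (isClosed_Kr).measurableSet ?_
          rw [mur_Kr (rn_pos n) (rn_lt_half n)]
          exact one_ne_zero
      _ ≤ dimH Zset := dimH_mono (subset_iUnion (fun n => Kr (rn n)) n)

lemma tsum_weights : ∑' n : ℕ, ((2:ℝ≥0∞)⁻¹) ^ (n+1) = 1 := by
  have h : ∀ n : ℕ, ((2:ℝ≥0∞)⁻¹) ^ (n+1) = ((2:ℝ≥0∞)⁻¹) ^ n * 2⁻¹ := fun n => pow_succ _ n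
  rw [tsum_congr h, ENNReal.tsum_mul_right, ENNReal.tsum_geometric,
    ENNReal.one_sub_inv_two, inv_inv, ENNReal.mul_inv_cancel two_ne_zero (by norm_num)]

lemma muZ_prob : IsProbabilityMeasure muZ := by
  constructor
  rw [muZ, Measure.sum_apply _ MeasurableSet.univ]
  have h : ∀ n : ℕ, (((2:ℝ≥0∞)⁻¹) ^ (n+1) • mur (rn n)) univ = ((2:ℝ≥0∞)⁻¹) ^ (n+1) := by
    intro n
    haveI := mur_prob (rn_pos n) (rn_lt_half n)
    rw [Measure.smul_apply, measure_univ, smul_eq_mul, mul_one]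
  rw [tsum_congr h, tsum_weights]

lemma mur_Zset (n : ℕ) : mur (rn n) Zset = 1 := by
  haveI := mur_prob (rn_pos n) (rn_lt_half n)
  refine le_antisymm prob_le_one ?_
  rw [← mur_Kr (rn_pos n) (rn_lt_half n)]
  exact measure_mono (subset_iUnion (fun n => Kr (rn n)) n)

lemma muZ_Zset : muZ Zset = 1 := by
  rw [muZ, Measure.sum_apply _ Zset_measurable]
  have h : ∀ n : ℕ, (((2:ℝ≥0∞)⁻¹) ^ (n+1) • mur (rn n)) Zset = ((2:ℝ≥0∞)⁻¹) ^ (n+1) :=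
    fun n => by rw [Measure.smul_apply, mur_Zset n, smul_eq_mul, mul_one]
  rw [tsum_congr h, tsum_weights]

lemma muZ_component_zero {T : Set ℝ} (hT : muZ T = 0) (n : ℕ) : mur (rn n) T = 0 := by
  have hle : (((2:ℝ≥0∞)⁻¹) ^ (n+1) • mur (rn n)) T ≤ muZ T :=
    Measure.le_iff'.1 (Measure.le_sum _ n) T
  rw [hT, nonpos_iff_eq_zero, Measure.smul_apply, smul_eq_mul] at hle
  rcases mul_eq_zero.1 hle with h | h
  · exfalso
    refine (pow_ne_zero (n+1) (a := ((2:ℝ≥0∞)⁻¹)) ?_) h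
    simp
  · exact h

end SD


open Filter Set MeasureTheory Topology
open scoped ENNReal NNReal

/-- Lower Hausdorff dimension of a measure:
`inf { dim_H E : E μ-measurable, μ E > 0 }`. -/
noncomputable def lowerDimH {α : Type*} [EMetricSpace α] [MeasurableSpace α]
    (μ : Measure α) : ℝ≥0∞ :=
  sInf { d : ℝ≥0∞ | ∃ E : Set α, NullMeasurableSet E μ ∧ 0 < μ E ∧ d = dimH E }

/-- Upper Hausdorff dimension of a measure:
`inf { dim_H E : E μ-measurable, μ Eᶜ = 0 }`. -/
noncomputable def upperDimH {α : Type*} [EMetricSpace α] [MeasurableSpace α]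
    (μ : Measure α) : ℝ≥0∞ :=
  sInf { d : ℝ≥0∞ | ∃ E : Set α, NullMeasurableSet E μ ∧ μ Eᶜ = 0 ∧ d = dimH E }

/-- There is a Borel set `Z ⊆ [0,1]` of Hausdorff dimension `1` with no measure
of full lower Hausdorff dimension but with a measure of full upper Hausdorff
dimension. -/
theorem stmt14 :
    ∃ Z : Set ℝ, Z ⊆ Set.Icc (0 : ℝ) 1 ∧ MeasurableSet Z ∧ dimH Z = 1 ∧
      (¬ ∃ μ : Measure ℝ, IsProbabilityMeasure μ ∧ μ Z = 1 ∧ lowerDimH μ = dimH Z) ∧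
      (∃ μ : Measure ℝ, IsProbabilityMeasure μ ∧ μ Z = 1 ∧ upperDimH μ = dimH Z) := by
  refine ⟨SD.Zset, SD.Zset_subset_Icc, SD.Zset_measurable, SD.dimH_Zset, ?_, ?_⟩
  · rintro ⟨μ, hμp, hμZ, heq⟩
    rw [SD.dimH_Zset] at heq
    have h0 : μ (⋃ n, SD.Kr (SD.rn n)) ≠ 0 := by
      rw [show (⋃ n, SD.Kr (SD.rn n)) = SD.Zset from rfl, hμZ]
      exact one_ne_zero
    have hex : ∃ n, μ (SD.Kr (SD.rn n)) ≠ 0 := by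
      by_contra hall
      push_neg at hall
      exact h0 (measure_iUnion_null hall)
    obtain ⟨n, hn⟩ := hex
    have hmem : dimH (SD.Kr (SD.rn n))
        ∈ {d : ℝ≥0∞ | ∃ E : Set ℝ, NullMeasurableSet E μ ∧ 0 < μ E ∧ d = dimH E} :=
      ⟨SD.Kr (SD.rn n), (SD.isClosed_Kr).measurableSet.nullMeasurableSet, zero_lt_iff.2 hn, rfl⟩
    have hle : lowerDimH μ ≤ dimH (SD.Kr (SD.rn n)) := sInf_le hmem
    have hlt : dimH (SD.Kr (SD.rn n)) < 1 := by
      refine lt_of_le_of_lt (SD.dimH_Kr_le (SD.rn_pos n) (SD.rn_lt_half n) (SD.sn_pos n)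
        (SD.rn_rpow_sn n)) ?_
      rw [ENNReal.ofReal_lt_one]
      exact SD.sn_lt_one n
    rw [heq] at hle
    exact absurd (lt_of_le_of_lt hle hlt) (lt_irrefl _)
  · refine ⟨SD.muZ, SD.muZ_prob, SD.muZ_Zset, ?_⟩
    rw [SD.dimH_Zset]
    refine le_antisymm ?_ ?_
    · have hmem : (1:ℝ≥0∞)
          ∈ {d : ℝ≥0∞ | ∃ E : Set ℝ, NullMeasurableSet E SD.muZ ∧ SD.muZ Eᶜ = 0 ∧ d = dimH E} := by
        refine ⟨SD.Zset, SD.Zset_measurable.nullMeasurableSet, ?_, SD.dimH_Zset.symm⟩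
        haveI := SD.muZ_prob
        rw [measure_compl SD.Zset_measurable (measure_ne_top _ _), SD.muZ_Zset, measure_univ]
        simp
      exact sInf_le hmem
    · refine le_sInf ?_
      rintro d ⟨E, hEnm, hEc, rfl⟩
      refine SD.one_le_of_forall_sn fun n => ?_
      have hc0 : SD.mur (SD.rn n) Eᶜ = 0 := SD.muZ_component_zero hEc n
      set N := toMeasurable (SD.mur (SD.rn n)) Eᶜ with hN
      have hNm : MeasurableSet N := measurableSet_toMeasurable _ _
      have hN0 : SD.mur (SD.rn n) N = 0 := by rw [hN, measure_toMeasurable]; exact hc0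
      haveI := SD.mur_prob (SD.rn_pos n) (SD.rn_lt_half n)
      have hG : SD.mur (SD.rn n) Nᶜ ≠ 0 := by
        rw [measure_compl hNm (measure_ne_top _ _), hN0, measure_univ]
        simp
      have hGE : Nᶜ ⊆ E := by
        rw [compl_subset_comm]
        exact subset_toMeasurable _ _
      calc ENNReal.ofReal (SD.sn n) ≤ dimH Nᶜ := SD.frostman_n n Nᶜ hNm.compl hG
        _ ≤ dimH E := dimH_mono hGE
end
end
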